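/- arXiv:1103.3950 — 6 statements merged into one kernel-verified Lean document; each statement's English description precedes it below -/
import Mathlib

section
/- Let b be a pure Nash equilibrium of the simultaneous first-price auction game with some tie-breaking rule, let (S_1,…,S_n) be the allocation the tie-breaking rule produces at b, and let p_j = max_i b_{ij} for every item j. Then (S_1,…,S_n; p_1,…,p_m) is a Walrasian equilibrium. -/
open MeasureTheory Finset

/-- A valuation: monotone non-decreasing with value `0` on the empty set. -/
def MonotoneVal {M : Type*} (v : Finset M → ℝ) : Prop :=
  v ∅ = 0 ∧ ∀ S T : Finset M, S ⊆ T → v S ≤ v T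

/-- `S` assigns every item to exactly one bidder (it is a partition of the items). -/
def IsAllocation {N M : Type*} (S : N → Finset M) : Prop :=
  ∀ j : M, ∃! i : N, j ∈ S i

/-- A tie-breaking rule: it maps every bid profile to a partition of the items
in which every item goes to a bidder whose bid on it is highest. -/
structure TieRule (N M : Type*) where
  alloc : (N → M → ℝ) → N → Finset M
  partition : ∀ b, IsAllocation (alloc b)
  highest : ∀ b i j, j ∈ alloc b i → ∀ i', b i' j ≤ b i j

/-- Bidder `i`'s (quasi-linear) utility in the simultaneous first-price auction. -/
def utility {N M : Type*} (v : N → Finset M → ℝ) (T : TieRule N M)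
    (b : N → M → ℝ) (i : N) : ℝ :=
  v i (T.alloc b i) - ∑ j ∈ T.alloc b i, b i j

/-- Pure Nash equilibrium: no bidder can strictly gain by a unilateral
(nonnegative) deviation. -/
def PureNash {N M : Type*} [DecidableEq N] (v : N → Finset M → ℝ) (T : TieRule N M)
    (b : N → M → ℝ) : Prop :=
  ∀ (i : N) (b' : M → ℝ), (∀ j, 0 ≤ b' j) →
    utility v T (Function.update b i b') i ≤ utility v T b i

/-- `ε`-equilibrium: no bidder can gain more than `ε` by a unilateral deviation. -/
def EpsNash {N M : Type*} [DecidableEq N] (v : N → Finset M → ℝ) (T : TieRule N M)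
    (b : N → M → ℝ) (ε : ℝ) : Prop :=
  ∀ (i : N) (b' : M → ℝ), (∀ j, 0 ≤ b' j) →
    utility v T (Function.update b i b') i ≤ utility v T b i + ε

/-- Walrasian equilibrium: a partition and nonnegative item prices such that
every bidder receives a demanded set. -/
def Walrasian {N M : Type*} (v : N → Finset M → ℝ) (S : N → Finset M) (p : M → ℝ) : Prop :=
  IsAllocation S ∧ (∀ j, 0 ≤ p j) ∧
    ∀ (i : N) (T : Finset M), v i T - ∑ j ∈ T, p j ≤ v i (S i) - ∑ j ∈ S i, p j

/-- Social welfare of an allocation. -/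
def welfare {N M : Type*} [Fintype N] (v : N → Finset M → ℝ) (S : N → Finset M) : ℝ :=
  ∑ i, v i (S i)

/-- Expected utility of bidder `i` when bidders bid independently according to
the mixed strategies `σ`. -/
noncomputable def expectedUtility {N M : Type*} [Fintype N]
    (v : N → Finset M → ℝ) (T : TieRule N M) (σ : N → Measure (M → ℝ)) (i : N) : ℝ :=
  ∫ b, utility v T b i ∂(Measure.pi σ)

/-- Mixed Nash equilibrium: no bidder can gain by deviating to any fixed
(nonnegative) bid vector. -/
def MixedNash {N M : Type*} [Fintype N] [DecidableEq N]
    (v : N → Finset M → ℝ) (T : TieRule N M) (σ : N → Measure (M → ℝ)) : Prop :=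
  ∀ (i : N) (b' : M → ℝ), (∀ j, 0 ≤ b' j) →
    expectedUtility v T (Function.update σ i (Measure.dirac b')) i ≤
      expectedUtility v T σ i

/-- Expected social welfare of a profile of mixed strategies. -/
noncomputable def expectedWelfare {N M : Type*} [Fintype N]
    (v : N → Finset M → ℝ) (T : TieRule N M) (σ : N → Measure (M → ℝ)) : ℝ :=
  ∫ b, welfare v (T.alloc b) ∂(Measure.pi σ)

/-- Every mixed strategy is supported on nonnegative bid vectors. -/
def NonnegMixed {N M : Type*} (σ : N → Measure (M → ℝ)) : Prop :=
  ∀ i, σ i {b | ∀ j, 0 ≤ b j} = 1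

/-- The AND valuation: value `1` on the full set of items, `0` on proper subsets. -/
def andVal (M : Type*) [Fintype M] [DecidableEq M] : Finset M → ℝ :=
  fun S => if S = Finset.univ then 1 else 0

/-- The OR valuation: value `v` on every nonempty set of items, `0` on `∅`. -/
def orVal (M : Type*) (v : ℝ) : Finset M → ℝ :=
  fun S => if S.Nonempty then v else 0

/-- A single-minded valuation: value `w` on every superset of `S`, `0` otherwise. -/
def singleMinded {M : Type*} [DecidableEq M] (S : Finset M) (w : ℝ) : Finset M → ℝ :=
  fun T => if S ⊆ T then w else 0

/-- `β`-XOS (β-fractionally subadditive) valuation. -/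
def BetaXOS {M : Type*} (β : ℝ) (v : Finset M → ℝ) : Prop :=
  ∃ (k : ℕ) (lam : Fin (k + 1) → M → ℝ),
    (∀ l j, 0 ≤ lam l j) ∧
    ∀ S : Finset M,
      (Finset.univ.sup' Finset.univ_nonempty fun l => ∑ j ∈ S, lam l j) ≤ v S ∧
      v S / β ≤ Finset.univ.sup' Finset.univ_nonempty fun l => ∑ j ∈ S, lam l j

/-- A pure Nash equilibrium of the simultaneous first-price auction game,
with the allocation produced by the tie-breaking rule and prices `p j = max_i b i j`,
is a Walrasian equilibrium. -/
theorem pure_nash_to_walrasian {n m : ℕ} (v : Fin n → Finset (Fin m) → ℝ)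
    (hmono : ∀ i, MonotoneVal (v i))
    (T : TieRule (Fin n) (Fin m)) (b : Fin n → Fin m → ℝ)
    (hb : ∀ i j, 0 ≤ b i j)
    (hN : PureNash v T b)
    (p : Fin m → ℝ) (hp : ∀ j, IsGreatest (Set.range fun i => b i j) (p j)) :
    Walrasian v (T.alloc b) p := by
  classical
  have hp0 : ∀ j, 0 ≤ p j := by
    intro j
    obtain ⟨i, hi⟩ := (hp j).1
    exact hi ▸ hb i j
  refine ⟨T.partition b, hp0, ?_⟩
  intro i Tset
  -- winners pay the price
  have hbp : ∀ j ∈ T.alloc b i, b i j = p j := by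
    intro j hj
    obtain ⟨i', hi'⟩ := (hp j).1
    exact le_antisymm ((hp j).2 ⟨i, rfl⟩) (hi' ▸ T.highest b i j hj i')
  refine le_of_forall_pos_le_add ?_
  intro ε hε
  set δ := ε / (Tset.card + 1) with hδdef
  have hcpos : (0:ℝ) < (Tset.card : ℝ) + 1 := by positivity
  have hδ : 0 < δ := div_pos hε hcpos
  set b' : Fin m → ℝ := fun j => if j ∈ Tset then p j + δ else 0 with hb'
  have hb'0 : ∀ j, 0 ≤ b' j := by
    intro j
    simp only [hb']
    split
    · linarith [hp0 j]
    · exact le_refl 0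
  have hTA : Tset ⊆ T.alloc (Function.update b i b') i := by
    intro j hj
    obtain ⟨i₀, hi₀, _⟩ := T.partition (Function.update b i b') j
    rcases eq_or_ne i₀ i with rfl | hne
    · exact hi₀
    · exfalso
      have hle := T.highest _ i₀ j hi₀ i
      rw [Function.update_self, Function.update_of_ne hne] at hle
      have h1 : b i₀ j ≤ p j := (hp j).2 ⟨i₀, rfl⟩
      have h2 : b' j = p j + δ := by simp [hb', hj]
      rw [h2] at hle
      linarith
  have hsum : ∑ j ∈ T.alloc (Function.update b i b') i, b' j
      = ∑ j ∈ Tset, (p j + δ) := by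
    simp only [hb']
    rw [Finset.sum_ite_mem]
    congr 1
    exact Finset.inter_eq_right.mpr hTA
  have hmonoA : v i Tset ≤ v i (T.alloc (Function.update b i b') i) :=
    (hmono i).2 _ _ hTA
  have hkey := hN i b' hb'0
  unfold utility at hkey
  simp only [Function.update_self] at hkey
  rw [hsum, Finset.sum_congr rfl hbp] at hkey
  have hsplit : ∑ j ∈ Tset, (p j + δ) = (∑ j ∈ Tset, p j) + Tset.card * δ := by
    rw [Finset.sum_add_distrib, Finset.sum_const, nsmul_eq_mul]
  rw [hsplit] at hkey
  have hcard : (Tset.card : ℝ) * δ ≤ ε := by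
    rw [hδdef, mul_comm, div_mul_eq_mul_div, div_le_iff₀ hcpos]
    nlinarith [hε.le, Nat.cast_nonneg (α := ℝ) Tset.card]
  linarith
end

section
/- Every pure Nash equilibrium of the simultaneous first-price auction game, under any tie-breaking rule, yields an allocation whose social welfare equals OPT, the maximum possible social welfare; that is, the price of anarchy of pure Nash equilibria is 1. -/
open MeasureTheory Finset

/-- Summing over an allocation is summing over all items. -/
theorem alloc_sum_eq {n m : ℕ} {S : Fin n → Finset (Fin m)} (hS : IsAllocation S)
    (f : Fin m → ℝ) : ∑ i, ∑ j ∈ S i, f j = ∑ j, f j := by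
  have h1 : ∀ i : Fin n, ∑ j ∈ S i, f j = ∑ j : Fin m, if j ∈ S i then f j else 0 := by
    intro i
    rw [Finset.sum_ite_mem, Finset.univ_inter]
  calc ∑ i, ∑ j ∈ S i, f j = ∑ i : Fin n, ∑ j : Fin m, if j ∈ S i then f j else 0 := by
        simp_rw [h1]
    _ = ∑ j : Fin m, ∑ i : Fin n, if j ∈ S i then f j else 0 := Finset.sum_comm
    _ = ∑ j, f j := by
        apply Finset.sum_congr rfl
        intro j _
        obtain ⟨i0, hi0, huniq⟩ := hS j
        rw [Finset.sum_eq_single_of_mem i0 (Finset.mem_univ _)]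
        · simp [hi0]
        · intro i _ hne
          have : j ∉ S i := fun h => hne (huniq i h)
          simp [this]

/-- Every pure Nash equilibrium of the simultaneous first-price auction game,
under any tie-breaking rule, has social welfare equal to the optimal social welfare `OPT`. -/
theorem pure_nash_welfare_optimal {n m : ℕ} (v : Fin n → Finset (Fin m) → ℝ)
    (hmono : ∀ i, MonotoneVal (v i))
    (T : TieRule (Fin n) (Fin m)) (b : Fin n → Fin m → ℝ)
    (hb : ∀ i j, 0 ≤ b i j)
    (hN : PureNash v T b)
    (OPT : ℝ)
    (hOPT : IsGreatest
      {w | ∃ S : Fin n → Finset (Fin m), IsAllocation S ∧ welfare v S = w} OPT) :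
    welfare v (T.alloc b) = OPT := by
  classical
  -- the equilibrium allocation
  set S : Fin n → Finset (Fin m) := T.alloc b with hS
  have hpart : IsAllocation S := T.partition b
  -- prices: for each item, the bid of its winner
  have hwin : ∀ j : Fin m, ∃ i, j ∈ S i := fun j => (hpart j).exists
  set p : Fin m → ℝ := fun j => b (hwin j).choose j with hp
  have hpwin : ∀ j, j ∈ S (hwin j).choose := fun j => (hwin j).choose_spec
  have hple : ∀ i j, b i j ≤ p j := fun i j => T.highest b _ j (hpwin j) i
  have hpeq : ∀ i j, j ∈ S i → b i j = p j := by
    intro i j hj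
    exact le_antisymm (hple i j) (T.highest b i j hj _)
  have hpnn : ∀ j, 0 ≤ p j := fun j => hb _ j
  -- Walrasian property: every bidder gets a demanded set at prices p
  have hwal : ∀ (i : Fin n) (U : Finset (Fin m)),
      v i U - ∑ j ∈ U, p j ≤ v i (S i) - ∑ j ∈ S i, p j := by
    intro i U
    have hui : utility v T b i = v i (S i) - ∑ j ∈ S i, p j := by
      unfold utility
      rw [Finset.sum_congr rfl fun j hj => hpeq i j hj]
    rw [← hui]
    have key : ∀ ε : ℝ, 0 < ε → v i U - ∑ j ∈ U, p j ≤ utility v T b i + ε * m := by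
      intro ε hε
      set b' : Fin m → ℝ := fun j => if j ∈ U then p j + ε else 0 with hb'
      have hb'nn : ∀ j, 0 ≤ b' j := by
        intro j
        simp only [hb']
        split
        · linarith [hpnn j]
        · exact le_refl 0
      set bb := Function.update b i b' with hbb
      set W := T.alloc bb i with hW
      have hUW : U ⊆ W := by
        intro j hj
        obtain ⟨i', hi'⟩ := (T.partition bb j).exists
        have hle : bb i j ≤ bb i' j := T.highest bb i' j hi' i
        have hii' : i' = i := by
          by_contra hne
          have h1 : bb i' j = b i' j := by
            simp [hbb, Function.update_of_ne hne]
          have h2 : bb i j = p j + ε := by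
            simp [hbb, hb', hj]
          rw [h1, h2] at hle
          linarith [hple i' j]
        rwa [hii'] at hi'
      have hsum : ∑ j ∈ W, bb i j = ∑ j ∈ U, (p j + ε) := by
        have : ∀ j ∈ W, bb i j = if j ∈ U then p j + ε else 0 := by
          intro j _
          simp [hbb, hb']
        rw [Finset.sum_congr rfl this, Finset.sum_ite_mem,
          Finset.inter_eq_right.mpr hUW]
      have hval : v i U ≤ v i W := (hmono i).2 U W hUW
      have hut : utility v T bb i = v i W - ∑ j ∈ U, (p j + ε) := by
        unfold utility
        rw [← hW, hsum]
      have hnash := hN i b' hb'nn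
      rw [← hbb, hut] at hnash
      have hcard : ∑ j ∈ U, (p j + ε) = (∑ j ∈ U, p j) + ε * U.card := by
        rw [Finset.sum_add_distrib]
        ring_nf
        simp [mul_comm]
      have hcardle : (U.card : ℝ) ≤ m := by
        exact_mod_cast (Finset.card_le_univ U).trans_eq (Finset.card_fin m)
      have : v i U - ∑ j ∈ U, (p j + ε) ≤ utility v T b i := le_trans (by linarith) hnash
      rw [hcard] at this
      nlinarith
    by_contra hcon
    push_neg at hcon
    rcases Nat.eq_zero_or_pos m with hm | hm
    · have := key 1 one_pos
      have h0 : (m:ℝ) = 0 := by exact_mod_cast hm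
      rw [h0] at this
      linarith
    · set δ := (v i U - ∑ j ∈ U, p j - utility v T b i) / (2 * m) with hδ
      have hmpos : (0:ℝ) < m := by exact_mod_cast hm
      have hδpos : 0 < δ := by
        apply div_pos
        · linarith
        · linarith
      have := key δ hδpos
      rw [hδ] at this
      have : v i U - ∑ j ∈ U, p j ≤ utility v T b i +
          (v i U - ∑ j ∈ U, p j - utility v T b i) / 2 := by
        have h2 : (v i U - ∑ j ∈ U, p j - utility v T b i) / (2 * m) * m =
            (v i U - ∑ j ∈ U, p j - utility v T b i) / 2 := by
          field_simp
        linarith [h2 ▸ this]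
      linarith
  -- efficiency: the equilibrium welfare is at least OPT
  obtain ⟨⟨Sstar, hSstar, hWstar⟩, hub⟩ := hOPT
  have hle1 : welfare v S ∈
      {w | ∃ S : Fin n → Finset (Fin m), IsAllocation S ∧ welfare v S = w} :=
    ⟨S, hpart, rfl⟩
  have h1 : welfare v S ≤ OPT := hub hle1
  have h2 : OPT ≤ welfare v S := by
    rw [← hWstar]
    have hsum1 : ∑ i, ∑ j ∈ Sstar i, p j = ∑ j, p j := alloc_sum_eq hSstar p
    have hsum2 : ∑ i, ∑ j ∈ S i, p j = ∑ j, p j := alloc_sum_eq hpart p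
    have := Finset.sum_le_sum (fun i (_ : i ∈ Finset.univ) => hwal i (Sstar i))
    simp only [Finset.sum_sub_distrib] at this
    unfold welfare
    rw [hsum1, hsum2] at this
    linarith
  exact le_antisymm h1 h2
end

section
/- Let b be an ε-equilibrium of the simultaneous first-price auction game (with any tie-breaking rule) in which there are no ties, i.e., for every item j and all bidders i ≠ i′ one has b_{ij} ≠ b_{i′j}. Let (S_1,…,S_n) be the induced allocation (each item goes to its unique highest bidder) and let p_j = max_i b_{ij}. Then the allocation and prices form an approximate Walrasian equilibrium: for every bidder i and every subset T of the items, v_i(T) − Σ_{j∈T} p_j ≤ v_i(S_i) − Σ_{j∈S_i} p_j + (m+1)ε. -/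
open MeasureTheory Finset

/-- An `ε`-equilibrium without ties, with the induced allocation and prices
`p j = max_i b i j`, forms an approximate Walrasian equilibrium: every bidder prefers his
assigned set over any set `T` up to an additive `(m+1)ε`. -/
theorem eps_nash_to_approx_walrasian {n m : ℕ} (v : Fin n → Finset (Fin m) → ℝ)
    (hmono : ∀ i, MonotoneVal (v i))
    (T : TieRule (Fin n) (Fin m)) (b : Fin n → Fin m → ℝ)
    (hb : ∀ i j, 0 ≤ b i j)
    (ε : ℝ) (hε : 0 ≤ ε)
    (hN : EpsNash v T b ε)
    (hnoties : ∀ (j : Fin m) (i i' : Fin n), i ≠ i' → b i j ≠ b i' j)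
    (p : Fin m → ℝ) (hp : ∀ j, IsGreatest (Set.range fun i => b i j) (p j)) :
    ∀ (i : Fin n) (Tset : Finset (Fin m)),
      v i Tset - ∑ j ∈ Tset, p j ≤
        v i (T.alloc b i) - ∑ j ∈ T.alloc b i, p j + (m + 1) * ε := by
  classical
  intro i Tset
  have hpm : ∀ (j : Fin m) (i' : Fin n), b i' j ≤ p j := fun j i' => (hp j).2 ⟨i', rfl⟩
  have hp0 : ∀ j, 0 ≤ p j := fun j => le_trans (hb i j) (hpm j i)
  have halloc : ∀ j ∈ T.alloc b i, p j = b i j := by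
    intro j hj
    refine le_antisymm ?_ (hpm j i)
    obtain ⟨i'', h⟩ := (hp j).1
    rw [← h]; exact T.highest b i j hj i''
  have hsum : ∑ j ∈ T.alloc b i, p j = ∑ j ∈ T.alloc b i, b i j :=
    Finset.sum_congr rfl halloc
  rw [hsum]
  have key : ∀ δ : ℝ, 0 < δ →
      v i Tset - ∑ j ∈ Tset, p j ≤
        v i (T.alloc b i) - ∑ j ∈ T.alloc b i, b i j + ε + (Tset.card : ℝ) * δ := by
    intro δ hδ
    set b' : Fin m → ℝ := fun j => if j ∈ Tset then p j + δ else 0 with hb'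
    have hb'nn : ∀ j, 0 ≤ b' j := by
      intro j; simp only [hb']
      split
      · exact add_nonneg (hp0 j) hδ.le
      · exact le_refl 0
    have hdev := hN i b' hb'nn
    set b2 := Function.update b i b' with hb2
    have hb2i : ∀ j, b2 i j = b' j := fun j => by simp [hb2]
    have hwin : Tset ⊆ T.alloc b2 i := by
      intro j hj
      obtain ⟨i', hi', _⟩ := T.partition b2 j
      have hle := T.highest b2 i' j hi' i
      by_cases h : i' = i
      · exact h ▸ hi'
      · exfalso
        rw [hb2i j] at hle
        have hb2i' : b2 i' j = b i' j := by simp [hb2, Function.update_of_ne h]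
        rw [hb2i'] at hle
        simp only [hb', if_pos hj] at hle
        exact absurd hle (not_le.mpr (lt_of_le_of_lt (hpm j i') (lt_add_of_pos_right _ hδ)))
    have hsum2 : ∑ j ∈ T.alloc b2 i, b2 i j = ∑ j ∈ Tset, p j + (Tset.card : ℝ) * δ := by
      have h1 : ∑ j ∈ T.alloc b2 i, b2 i j
          = ∑ j ∈ T.alloc b2 i, (if j ∈ Tset then p j + δ else 0) := by
        refine Finset.sum_congr rfl fun j _ => ?_
        rw [hb2i j]
      rw [h1, Finset.sum_ite_mem, Finset.inter_eq_right.mpr hwin, Finset.sum_add_distrib,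
        Finset.sum_const, nsmul_eq_mul]
    have hmonW : v i Tset ≤ v i (T.alloc b2 i) := (hmono i).2 _ _ hwin
    have hdev' : v i (T.alloc b2 i) - ∑ j ∈ T.alloc b2 i, b2 i j ≤
        v i (T.alloc b i) - ∑ j ∈ T.alloc b i, b i j + ε := hdev
    rw [hsum2] at hdev'
    linarith
  have hmain : v i Tset - ∑ j ∈ Tset, p j ≤
      v i (T.alloc b i) - ∑ j ∈ T.alloc b i, b i j + ε := by
    refine le_of_forall_pos_le_add fun η hη => ?_
    have hc : (0:ℝ) < (Tset.card : ℝ) + 1 := by positivity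
    have hkey := key (η / ((Tset.card : ℝ) + 1)) (by positivity)
    have hle : (Tset.card : ℝ) * (η / ((Tset.card : ℝ) + 1)) ≤ η := by
      rw [mul_div_assoc']
      rw [div_le_iff₀ hc]
      nlinarith [Nat.cast_nonneg (α := ℝ) Tset.card]
    linarith
  have hm : (0:ℝ) ≤ (m : ℝ) := Nat.cast_nonneg m
  nlinarith
end

section
/- For m ≥ 2 and v ≥ 0, the AND-OR valuation profile on m items admits a Walrasian equilibrium if and only if v ≤ 1/m. Moreover, when v ≤ 1/m, setting the price of every item to v and allocating all items to the AND bidder is a Walrasian equilibrium. -/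
open MeasureTheory Finset

/-- For `m ≥ 2` and `v ≥ 0`, the AND-OR valuation profile on `m` items admits
a Walrasian equilibrium iff `v ≤ 1/m`; moreover when `v ≤ 1/m`, pricing every item at `v`
and allocating all items to the AND bidder is a Walrasian equilibrium. -/
theorem and_or_walrasian_iff {m : ℕ} (hm : 2 ≤ m) (v : ℝ) (hv : 0 ≤ v) :
    ((∃ (S : Fin 2 → Finset (Fin m)) (p : Fin m → ℝ),
        Walrasian ![andVal (Fin m), orVal (Fin m) v] S p) ↔ v ≤ 1 / m) ∧
      (v ≤ 1 / m →
        Walrasian ![andVal (Fin m), orVal (Fin m) v]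
          ![(Finset.univ : Finset (Fin m)), (∅ : Finset (Fin m))] (fun _ => v)) := by
  have hmR : (2:ℝ) ≤ (m:ℝ) := by exact_mod_cast hm
  have hm0 : (0:ℝ) < (m:ℝ) := by linarith
  have huniv_ne : (∅ : Finset (Fin m)) ≠ Finset.univ := by
    intro h
    have : (0:ℕ) = m := by
      simpa [Finset.card_univ] using congrArg Finset.card h
    omega
  have back : v ≤ 1 / m →
      Walrasian ![andVal (Fin m), orVal (Fin m) v]
        ![(Finset.univ : Finset (Fin m)), (∅ : Finset (Fin m))] (fun _ => v) := by
    intro hvm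
    have hmv : (m:ℝ) * v ≤ 1 := by
      rw [le_div_iff₀ hm0] at hvm; linarith
    refine ⟨?_, fun _ => hv, ?_⟩
    · intro j
      refine ⟨0, by simp, ?_⟩
      intro i hi
      fin_cases i
      · rfl
      · simp at hi
    · intro i T
      fin_cases i
      · simp only [Fin.zero_eta, Fin.isValue, Matrix.cons_val_zero, Finset.sum_const, nsmul_eq_mul,
          Finset.card_univ, Fintype.card_fin]
        have hTv : andVal (Fin m) Finset.univ = 1 := by simp [andVal]
        rw [hTv]
        by_cases h : T = Finset.univ
        · subst h
          rw [hTv]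
          simp [Finset.card_univ]
        · have h0 : andVal (Fin m) T = 0 := by simp [andVal, h]
          rw [h0]
          have hc : (0:ℝ) ≤ (T.card : ℝ) * v := by positivity
          linarith
      · simp only [Fin.mk_one, Fin.isValue, Matrix.cons_val_one, Matrix.head_cons, Matrix.cons_val_zero, Finset.sum_const,
          nsmul_eq_mul, Finset.sum_empty, Finset.card_empty, Nat.cast_zero, zero_mul]
        have h0 : orVal (Fin m) v ∅ = 0 := by simp [orVal]
        rw [h0]
        by_cases h : T.Nonempty
        · have hT : orVal (Fin m) v T = v := by simp [orVal, h]
          rw [hT]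
          have hc : (1:ℝ) ≤ (T.card : ℝ) := by
            exact_mod_cast Finset.one_le_card.mpr h
          nlinarith
        · rw [Finset.not_nonempty_iff_eq_empty] at h
          subst h
          simp [orVal]
  refine ⟨⟨?_, fun h => ⟨_, _, back h⟩⟩, back⟩
  rintro ⟨S, p, hA, hp, hd⟩
  have hd0 : ∀ T : Finset (Fin m),
      andVal (Fin m) T - ∑ j ∈ T, p j ≤ andVal (Fin m) (S 0) - ∑ j ∈ S 0, p j := by
    intro T; simpa using hd 0 T
  have hd1 : ∀ T : Finset (Fin m),
      orVal (Fin m) v T - ∑ j ∈ T, p j ≤ orVal (Fin m) v (S 1) - ∑ j ∈ S 1, p j := by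
    intro T; simpa using hd 1 T
  have hcover : ∀ j, j ∈ S 0 ∨ j ∈ S 1 := by
    intro j
    obtain ⟨i, hi, -⟩ := hA j
    fin_cases i
    · exact Or.inl hi
    · exact Or.inr hi
  have hdisj : Disjoint (S 0) (S 1) := by
    rw [Finset.disjoint_left]
    intro j h0 h1
    obtain ⟨i, -, hu⟩ := hA j
    have e0 := hu 0 h0
    have e1 := hu 1 h1
    rw [← e1] at e0
    exact absurd e0 (by decide)
  have hunion : S 0 ∪ S 1 = Finset.univ := by
    ext j
    simp only [Finset.mem_union, Finset.mem_univ, iff_true]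
    exact hcover j
  have hsum : ∑ j ∈ S 0, p j + ∑ j ∈ S 1, p j = ∑ j, p j := by
    rw [← Finset.sum_union hdisj, hunion]
  by_cases h : S 0 = Finset.univ
  · -- AND bidder gets everything
    have hB : S 1 = ∅ := by
      refine Finset.eq_empty_of_forall_notMem fun j hj => ?_
      exact (Finset.disjoint_left.mp hdisj (h ▸ Finset.mem_univ j)) hj
    have h1 : ∀ j, v ≤ p j := by
      intro j
      have := hd1 {j}
      rw [hB] at this
      simp only [Finset.sum_singleton, Finset.sum_empty] at this
      have hsj : orVal (Fin m) v {j} = v := by simp [orVal]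
      have he : orVal (Fin m) v ∅ = 0 := by simp [orVal]
      rw [hsj, he] at this
      linarith
    have h2 : ∑ j, p j ≤ 1 := by
      have := hd0 ∅
      rw [h] at this
      have he : andVal (Fin m) ∅ = 0 := by simp [andVal, huniv_ne]
      have hu : andVal (Fin m) Finset.univ = 1 := by simp [andVal]
      rw [he, hu] at this
      simp only [Finset.sum_empty] at this
      linarith
    have h3 : (m:ℝ) * v ≤ ∑ j, p j := by
      calc (m:ℝ) * v = ∑ _j : Fin m, v := by
            simp [Finset.card_univ, mul_comm]
        _ ≤ ∑ j, p j := Finset.sum_le_sum fun j _ => h1 j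
    rw [le_div_iff₀ hm0]
    linarith
  · -- AND bidder does not get everything: contradiction
    exfalso
    have hz : ∑ j ∈ S 0, p j = 0 := by
      have := hd0 ∅
      have he : andVal (Fin m) ∅ = 0 := by simp [andVal, huniv_ne]
      have h0 : andVal (Fin m) (S 0) = 0 := by simp [andVal, h]
      rw [he, h0] at this
      simp only [Finset.sum_empty] at this
      have hnn : 0 ≤ ∑ j ∈ S 0, p j := Finset.sum_nonneg fun j _ => hp j
      linarith
    have h1 : 1 ≤ ∑ j ∈ S 1, p j := by
      have := hd0 Finset.univ
      have hu : andVal (Fin m) Finset.univ = 1 := by simp [andVal]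
      have h0 : andVal (Fin m) (S 0) = 0 := by simp [andVal, h]
      rw [hu, h0] at this
      linarith [hsum]
    have hBne : (S 1).Nonempty := by
      rw [Finset.nonempty_iff_ne_empty]
      intro hB
      rw [hB] at h1
      simp at h1
      linarith
    have hle : ∀ j : Fin m, ∑ k ∈ S 1, p k ≤ p j := by
      intro j
      have := hd1 {j}
      have hsj : orVal (Fin m) v {j} = v := by simp [orVal]
      have hS1 : orVal (Fin m) v (S 1) = v := by simp [orVal, hBne]
      rw [hsj, hS1] at this
      simp only [Finset.sum_singleton] at this
      linarith
    have hbig : (m:ℝ) * (∑ k ∈ S 1, p k) ≤ ∑ j, p j := by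
      calc (m:ℝ) * (∑ k ∈ S 1, p k) = ∑ _j : Fin m, (∑ k ∈ S 1, p k) := by
            simp [Finset.card_univ, mul_comm]
        _ ≤ ∑ j, p j := Finset.sum_le_sum fun j _ => hle j
    have hEq : ∑ j, p j = ∑ k ∈ S 1, p k := by linarith [hsum, hz]
    rw [hEq] at hbig
    nlinarith
end

section
/- Consider the AND-OR game on 2 items with v > 1/2. Let the AND bidder draw y ∈ [0,1/2] from the distribution with cumulative distribution function F(y) = (v − 1/2)/(v − y) (which has an atom at 0 of mass 1 − 1/(2v)) and bid (y,y), and let the OR bidder draw x ∈ [0,1/2] from the distribution with cumulative distribution function G(x) = x/(1−x), choose one of the two items uniformly at random, and bid x on that item and 0 on the other. This pair of mixed strategies is a mixed Nash equilibrium of the game under any tie-breaking rule; in it the AND bidder's expected utility is 0 and the OR bidder's expected utility is v − 1/2. -/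
open MeasureTheory Finset

section AndOrProofs
-- ### helpers
namespace AndOr

lemma sum_fin2 (S : Finset (Fin 2)) (f : Fin 2 → ℝ) :
    ∑ j ∈ S, f j = (if 0 ∈ S then f 0 else 0) + (if 1 ∈ S then f 1 else 0) := by
  have : ∑ j ∈ S, f j = ∑ j ∈ Finset.univ, if j ∈ S then f j else 0 := by
    rw [Finset.sum_ite_mem, Finset.univ_inter]
  rw [this, Fin.sum_univ_two]

lemma univ_iff (S : Finset (Fin 2)) : S = Finset.univ ↔ 0 ∈ S ∧ 1 ∈ S := by
  constructor
  · rintro rfl; exact ⟨Finset.mem_univ _, Finset.mem_univ _⟩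
  · rintro ⟨h0, h1⟩
    apply Finset.eq_univ_iff_forall.2
    intro j; fin_cases j <;> assumption

lemma nonempty_iff (S : Finset (Fin 2)) : S.Nonempty ↔ 0 ∈ S ∨ 1 ∈ S := by
  constructor
  · rintro ⟨j, hj⟩; fin_cases j
    · exact Or.inl hj
    · exact Or.inr hj
  · rintro (h | h) <;> exact ⟨_, h⟩

variable (T : TieRule (Fin 2) (Fin 2)) (b : Fin 2 → Fin 2 → ℝ)

lemma mem_one_iff (j : Fin 2) : j ∈ T.alloc b 1 ↔ j ∉ T.alloc b 0 := by
  obtain ⟨i, hi, hu⟩ := T.partition b j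
  constructor
  · intro h1 h0
    have e0 := hu 0 h0
    have e1 := hu 1 h1
    exact absurd (e0.trans e1.symm) (by decide)
  · intro h0
    have hi2 : i = 1 := by
      fin_cases i
      · exact absurd hi h0
      · rfl
    rwa [hi2] at hi

lemma mem_zero_of_lt (j : Fin 2) (h : b 1 j < b 0 j) : j ∈ T.alloc b 0 := by
  by_contra h0
  have h1 : j ∈ T.alloc b 1 := (mem_one_iff T b j).2 h0
  exact absurd (T.highest b 1 j h1 0) (not_le.2 h)

lemma mem_one_of_lt (j : Fin 2) (h : b 0 j < b 1 j) : j ∈ T.alloc b 1 := by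
  rw [mem_one_iff]
  intro h0
  exact absurd (T.highest b 0 j h0 1) (not_le.2 h)

/-- the valuation profile -/
noncomputable def V (v : ℝ) : Fin 2 → Finset (Fin 2) → ℝ := ![andVal (Fin 2), orVal (Fin 2) v]

lemma utility0_eq (v : ℝ) : utility (V v) T b 0 =
    (if 0 ∈ T.alloc b 0 ∧ 1 ∈ T.alloc b 0 then (1:ℝ) else 0)
      - ((if 0 ∈ T.alloc b 0 then b 0 0 else 0) + (if 1 ∈ T.alloc b 0 then b 0 1 else 0)) := by
  rw [utility, sum_fin2]
  congr 1
  simp only [V, Matrix.cons_val_zero, andVal, univ_iff]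

lemma utility1_eq (v : ℝ) : utility (V v) T b 1 =
    (if 0 ∈ T.alloc b 1 ∨ 1 ∈ T.alloc b 1 then v else 0)
      - ((if 0 ∈ T.alloc b 1 then b 1 0 else 0) + (if 1 ∈ T.alloc b 1 then b 1 1 else 0)) := by
  rw [utility, sum_fin2]
  congr 1
  simp only [V, Matrix.cons_val_one, Matrix.head_cons, Matrix.cons_val_zero, orVal, nonempty_iff]



variable (T : TieRule (Fin 2) (Fin 2)) (b : Fin 2 → Fin 2 → ℝ)

lemma path_utility (v : ℝ) (y x : ℝ) (hy : 0 ≤ y) (hxy : x ≠ y) (hx : 0 < x)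
    (e00 : b 0 0 = y) (e01 : b 0 1 = y)
    (hb1 : (b 1 0 = x ∧ b 1 1 = 0) ∨ (b 1 0 = 0 ∧ b 1 1 = x)) :
    utility (V v) T b 0 = (if x ≤ y then 1 - 2*y else -y) ∧
    utility (V v) T b 1 = (if x ≤ y then 0 else v - x) := by
  rcases lt_or_gt_of_ne hxy with hlt | hgt
  · -- x < y : AND wins both
    have hy0 : 0 < y := lt_trans hx hlt
    rw [if_pos hlt.le, if_pos hlt.le]
    rcases hb1 with ⟨f0, f1⟩ | ⟨f0, f1⟩
    · have m0 : (0:Fin 2) ∈ T.alloc b 0 := mem_zero_of_lt T b 0 (by rw [f0, e00]; exact hlt)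
      have m1 : (1:Fin 2) ∈ T.alloc b 0 := mem_zero_of_lt T b 1 (by rw [f1, e01]; exact hy0)
      have n0 : (0:Fin 2) ∉ T.alloc b 1 := fun h => ((mem_one_iff T b 0).1 h) m0
      have n1 : (1:Fin 2) ∉ T.alloc b 1 := fun h => ((mem_one_iff T b 1).1 h) m1
      rw [utility0_eq, utility1_eq]
      simp [m0, m1, n0, n1, e00, e01]
      ring
    · have m0 : (0:Fin 2) ∈ T.alloc b 0 := mem_zero_of_lt T b 0 (by rw [f0, e00]; exact hy0)
      have m1 : (1:Fin 2) ∈ T.alloc b 0 := mem_zero_of_lt T b 1 (by rw [f1, e01]; exact hlt)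
      have n0 : (0:Fin 2) ∉ T.alloc b 1 := fun h => ((mem_one_iff T b 0).1 h) m0
      have n1 : (1:Fin 2) ∉ T.alloc b 1 := fun h => ((mem_one_iff T b 1).1 h) m1
      rw [utility0_eq, utility1_eq]
      simp [m0, m1, n0, n1, e00, e01]
      ring
  · -- y < x : OR wins its loaded item
    rw [if_neg (not_le.2 hgt), if_neg (not_le.2 hgt)]
    rcases hb1 with ⟨f0, f1⟩ | ⟨f0, f1⟩
    · have w0 : (0:Fin 2) ∈ T.alloc b 1 := mem_one_of_lt T b 0 (by rw [f0, e00]; exact hgt)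
      have n0 : (0:Fin 2) ∉ T.alloc b 0 := (mem_one_iff T b 0).1 w0
      constructor
      · rw [utility0_eq]
        rcases eq_or_lt_of_le hy with h0 | hpos
        · simp [n0, e00, e01, ← h0]
        · have m1 : (1:Fin 2) ∈ T.alloc b 0 := mem_zero_of_lt T b 1 (by rw [f1, e01]; exact hpos)
          simp [n0, m1, e00, e01]
      · rw [utility1_eq]
        simp [w0, f0, f1]
    · have w1 : (1:Fin 2) ∈ T.alloc b 1 := mem_one_of_lt T b 1 (by rw [f1, e01]; exact hgt)
      have n1 : (1:Fin 2) ∉ T.alloc b 0 := fun h => ((mem_one_iff T b 1).1 w1) h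
      constructor
      · rw [utility0_eq]
        rcases eq_or_lt_of_le hy with h0 | hpos
        · simp [n1, e00, e01, ← h0]
        · have m0 : (0:Fin 2) ∈ T.alloc b 0 := mem_zero_of_lt T b 0 (by rw [f0, e00]; exact hpos)
          simp [n1, m0, e00, e01]
      · rw [utility1_eq]
        simp [w1, f0, f1]

/-- upper bound function for AND deviations, one load -/
noncomputable def phi (x p q : ℝ) : ℝ :=
  if 0 < q then (if x ≤ p then 1 - p - q else -q) else (if x ≤ p then max (1-p) 0 else 0)

lemma dev0_utility_le_left (v : ℝ) (b' : Fin 2 → ℝ) (hb' : ∀ j, 0 ≤ b' j) (x : ℝ)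
    (h00 : b 0 0 = b' 0) (h01 : b 0 1 = b' 1)
    (f0 : b 1 0 = x) (f1 : b 1 1 = 0) (hx : x ≠ b' 0) :
    utility (V v) T b 0 ≤ phi x (b' 0) (b' 1) := by
  rw [utility0_eq, phi]
  rcases lt_or_gt_of_ne hx with hlt | hgt
  · have m0 : (0:Fin 2) ∈ T.alloc b 0 := mem_zero_of_lt T b 0 (by rw [f0, h00]; exact hlt)
    by_cases hq : 0 < b' 1
    · have m1 : (1:Fin 2) ∈ T.alloc b 0 := mem_zero_of_lt T b 1 (by rw [f1, h01]; exact hq)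
      rw [if_pos hq, if_pos hlt.le]
      simp only [m0, m1, and_self, if_true, h00, h01]
      ring_nf
      try simp
      try linarith
    · have hq0 : b' 1 = 0 := le_antisymm (not_lt.1 hq) (hb' 1)
      rw [if_neg hq, if_pos hlt.le]
      by_cases m1 : (1:Fin 2) ∈ T.alloc b 0
      · simp only [m0, m1, and_self, if_pos, if_true, h00, h01, hq0, add_zero]
        calc (1:ℝ) - b' 0 ≤ max (1 - b' 0) 0 := le_max_left _ _
        _ = max (1 - b' 0) 0 := rfl
      · simp only [m0, m1, and_false, if_false, if_true, h00, h01, hq0, add_zero]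
        calc (0:ℝ) - b' 0 ≤ 0 := by linarith [hb' 0]
        _ ≤ max (1 - b' 0) 0 := le_max_right _ _
  · have w0 : (0:Fin 2) ∈ T.alloc b 1 := mem_one_of_lt T b 0 (by rw [f0, h00]; exact hgt)
    have n0 : (0:Fin 2) ∉ T.alloc b 0 := (mem_one_iff T b 0).1 w0
    rw [if_neg (not_le.2 hgt)] ; rw [if_neg (not_le.2 hgt)]
    by_cases hq : 0 < b' 1
    · have m1 : (1:Fin 2) ∈ T.alloc b 0 := mem_zero_of_lt T b 1 (by rw [f1, h01]; exact hq)
      rw [if_pos hq]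
      simp [n0, m1, h01]
    · have hq0 : b' 1 = 0 := le_antisymm (not_lt.1 hq) (hb' 1)
      rw [if_neg hq]
      by_cases m1 : (1:Fin 2) ∈ T.alloc b 0 <;> simp [n0, m1, h01, hq0]

lemma dev0_utility_le_right (v : ℝ) (b' : Fin 2 → ℝ) (hb' : ∀ j, 0 ≤ b' j) (x : ℝ)
    (h00 : b 0 0 = b' 0) (h01 : b 0 1 = b' 1)
    (f0 : b 1 0 = 0) (f1 : b 1 1 = x) (hx : x ≠ b' 1) :
    utility (V v) T b 0 ≤ phi x (b' 1) (b' 0) := by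
  rw [utility0_eq, phi]
  rcases lt_or_gt_of_ne hx with hlt | hgt
  · have m1 : (1:Fin 2) ∈ T.alloc b 0 := mem_zero_of_lt T b 1 (by rw [f1, h01]; exact hlt)
    by_cases hq : 0 < b' 0
    · have m0 : (0:Fin 2) ∈ T.alloc b 0 := mem_zero_of_lt T b 0 (by rw [f0, h00]; exact hq)
      rw [if_pos hq, if_pos hlt.le]
      simp only [m0, m1, and_self, if_true, h00, h01]
      ring_nf
      try simp
      try linarith
    · have hq0 : b' 0 = 0 := le_antisymm (not_lt.1 hq) (hb' 0)
      rw [if_neg hq, if_pos hlt.le]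
      by_cases m0 : (0:Fin 2) ∈ T.alloc b 0
      · simp only [m0, m1, and_self, if_pos, if_true, h00, h01, hq0, zero_add]
        exact le_max_left _ _
      · simp only [m0, m1, false_and, if_false, h00, h01, hq0, zero_add]
        calc (0:ℝ) - b' 1 ≤ 0 := by linarith [hb' 1]
        _ ≤ max (1 - b' 1) 0 := le_max_right _ _
  · have w1 : (1:Fin 2) ∈ T.alloc b 1 := mem_one_of_lt T b 1 (by rw [f1, h01]; exact hgt)
    have n1 : (1:Fin 2) ∉ T.alloc b 0 := (mem_one_iff T b 1).1 w1
    rw [if_neg (not_le.2 hgt)] ; rw [if_neg (not_le.2 hgt)]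
    by_cases hq : 0 < b' 0
    · have m0 : (0:Fin 2) ∈ T.alloc b 0 := mem_zero_of_lt T b 0 (by rw [f0, h00]; exact hq)
      rw [if_pos hq]
      simp [n1, m0, h00]
    · have hq0 : b' 0 = 0 := le_antisymm (not_lt.1 hq) (hb' 0)
      rw [if_neg hq]
      by_cases m0 : (0:Fin 2) ∈ T.alloc b 0 <;> simp [n1, m0, h00, hq0]

lemma dev1_utility_le (v : ℝ) (b' : Fin 2 → ℝ) (hb' : ∀ j, 0 ≤ b' j)
    (h00 : b 0 1 = b 0 0) (h10 : b 1 0 = b' 0) (h11 : b 1 1 = b' 1) :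
    utility (V v) T b 1 ≤
      (if b 0 0 ≤ max (b' 0) (b' 1) then max (v - max (b' 0) (b' 1)) 0 else 0) := by
  set M := max (b' 0) (b' 1) with hM
  rw [utility1_eq]
  by_cases m0 : (0:Fin 2) ∈ T.alloc b 1 <;> by_cases m1 : (1:Fin 2) ∈ T.alloc b 1
  · have hy0 : b 0 0 ≤ b' 0 := by have := T.highest b 1 0 m0 0; rwa [h10] at this
    rw [if_pos (hy0.trans (le_max_left _ _))]
    simp only [m0, m1, or_self, if_true, h10, h11]
    have h1 : v - (b' 0 + b' 1) ≤ v - M := by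
      rcases max_cases (b' 0) (b' 1) with ⟨hm, _⟩ | ⟨hm, _⟩ <;> rw [hM, hm]
      · linarith [hb' 1]
      · linarith [hb' 0]
    exact h1.trans (le_max_left _ _)
  · have hy0 : b 0 0 ≤ b' 0 := by have := T.highest b 1 0 m0 0; rwa [h10] at this
    have h1' : (1:Fin 2) ∈ T.alloc b 0 := by
      by_contra h; exact m1 ((mem_one_iff T b 1).2 h)
    have hb1y : b' 1 ≤ b 0 0 := by
      have := T.highest b 0 1 h1' 1; rwa [h11, h00] at this
    have hMeq : M = b' 0 := max_eq_left (hb1y.trans hy0)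
    rw [if_pos (hy0.trans (le_max_left _ _))]
    simp only [m0, m1, true_or, if_true, if_false, add_zero, h10, hMeq]
    exact le_max_left _ _
  · have hy1 : b 0 0 ≤ b' 1 := by
      have := T.highest b 1 1 m1 0; rwa [h11, h00] at this
    have h0' : (0:Fin 2) ∈ T.alloc b 0 := by
      by_contra h; exact m0 ((mem_one_iff T b 0).2 h)
    have hb0y : b' 0 ≤ b 0 0 := by
      have := T.highest b 0 0 h0' 1; rwa [h10] at this
    have hMeq : M = b' 1 := max_eq_right (hb0y.trans hy1)
    rw [if_pos (hy1.trans (le_max_right _ _))]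
    simp only [m0, m1, or_true, if_true, if_false, zero_add, h11, hMeq]
    exact le_max_left _ _
  · simp only [m0, m1, or_self, if_false, add_zero, sub_zero]
    norm_num
    split_ifs
    · exact le_max_right _ _
    · exact le_rfl

end AndOr

namespace AndOr

lemma sing_zero {μ : Measure ℝ} [IsFiniteMeasure μ] {c : ℝ}
    (h : ∀ ε : ℝ, 0 < ε → ∃ c' < c, μ (Set.Iic c) ≤ μ (Set.Iic c') + ENNReal.ofReal ε) :
    μ {c} = 0 := by
  refine le_antisymm ?_ zero_le
  refine ENNReal.le_of_forall_pos_le_add (fun ε hε _ => ?_)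
  obtain ⟨c', hc', hle⟩ := h ε (by exact_mod_cast hε)
  have hsub : {c} ⊆ Set.Iic c \ Set.Iic c' := by
    intro z hz
    rw [Set.mem_singleton_iff] at hz
    subst hz
    exact ⟨Set.mem_Iic.2 le_rfl, fun h => absurd (Set.mem_Iic.1 h) (not_le.2 hc')⟩
  calc μ {c} ≤ μ (Set.Iic c \ Set.Iic c') := measure_mono hsub
    _ = μ (Set.Iic c) - μ (Set.Iic c') :=
        measure_diff (Set.Iic_subset_Iic.2 hc'.le) measurableSet_Iic.nullMeasurableSet
          (measure_ne_top μ _)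
    _ ≤ ENNReal.ofReal ε := tsub_le_iff_right.2 (by rwa [add_comm] at hle)
    _ = 0 + ε := by rw [zero_add, ENNReal.ofReal_coe_nnreal]

section CDF
variable {v : ℝ} {μF μG : Measure ℝ} [IsProbabilityMeasure μF] [IsProbabilityMeasure μG]

variable (hv : 1 / 2 < v)
variable (hF : ∀ y : ℝ, μF (Set.Iic y) =
      if y < 0 then 0 else if y ≤ 1 / 2 then ENNReal.ofReal ((v - 1 / 2) / (v - y)) else 1)
variable (hG : ∀ x : ℝ, μG (Set.Iic x) =
      if x < 0 then 0 else if x ≤ 1 / 2 then ENNReal.ofReal (x / (1 - x)) else 1)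

include hG in
lemma Giic0 : μG (Set.Iic (0:ℝ)) = 0 := by
  rw [hG]
  norm_num

include hG in
lemma Gsing (c : ℝ) : μG {c} = 0 := by
  rcases le_or_gt c 0 with hc | hc
  · apply measure_mono_null _ (Giic0 hG)
    intro z hz
    rw [Set.mem_singleton_iff] at hz
    subst hz
    exact hc
  rcases le_or_gt c (1/2) with h2 | h2
  · apply sing_zero
    intro ε hε
    set c' := max (c/2) (c - ε/8) with hc'
    have hc'lt : c' < c := max_lt (by linarith) (by linarith)
    refine ⟨c', hc'lt, ?_⟩
    have hc'0 : 0 < c' := lt_of_lt_of_le (by linarith : (0:ℝ) < c/2) (le_max_left _ _)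
    have hcε : c - ε/8 ≤ c' := le_max_right _ _
    have d1 : 0 < 1 - c := by linarith
    have d2 : 0 < 1 - c' := by linarith
    rw [hG c, hG c', if_neg (not_lt.2 hc.le), if_pos h2, if_neg (not_lt.2 hc'0.le),
      if_pos (by linarith : c' ≤ 1/2)]
    have e1 : c/(1-c) - c'/(1-c') = (c-c')/((1-c)*(1-c')) := by field_simp; ring
    have e2 : (c-c')/((1-c)*(1-c')) ≤ ε := by
      have h14 : (1:ℝ)/4 ≤ (1-c)*(1-c') := by nlinarith
      have h15 := mul_le_mul_of_nonneg_left h14 hε.le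
      rw [div_le_iff₀ (by positivity)]
      linarith
    have real : c/(1-c) ≤ c'/(1-c') + ε := by linarith
    calc ENNReal.ofReal (c/(1-c)) ≤ ENNReal.ofReal (c'/(1-c') + ε) :=
          ENNReal.ofReal_le_ofReal real
      _ ≤ ENNReal.ofReal (c'/(1-c')) + ENNReal.ofReal ε := ENNReal.ofReal_add_le
  · apply sing_zero
    intro ε hε
    refine ⟨(1/2 + c)/2, by linarith, ?_⟩
    rw [hG c, hG ((1/2 + c)/2), if_neg (not_lt.2 hc.le), if_neg (by push_neg; linarith),
      if_neg (by push_neg; linarith), if_neg (by push_neg; linarith)]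
    exact le_self_add

include hv hF in
lemma Fsing (c : ℝ) (hc : 0 < c) : μF {c} = 0 := by
  rcases le_or_gt c (1/2) with h2 | h2
  · apply sing_zero
    intro ε hε
    set c' := max (c/2) (c - ε*(v - 1/2)/2) with hc'
    have hc'lt : c' < c := max_lt (by linarith) (by nlinarith)
    refine ⟨c', hc'lt, ?_⟩
    have hc'0 : 0 < c' := lt_of_lt_of_le (by linarith : (0:ℝ) < c/2) (le_max_left _ _)
    have hcε : c - ε*(v-1/2)/2 ≤ c' := le_max_right _ _
    have d1 : 0 < v - c := by linarith
    have d2 : 0 < v - c' := by linarith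
    rw [hF c, hF c', if_neg (not_lt.2 hc.le), if_pos h2, if_neg (not_lt.2 hc'0.le),
      if_pos (by linarith : c' ≤ 1/2)]
    have e1 : (v-1/2)/(v-c) - (v-1/2)/(v-c') = (v-1/2)*(c-c')/((v-c)*(v-c')) := by
      field_simp; ring
    have q : (v-1/2)*(v-1/2) ≤ (v-c)*(v-c') := by nlinarith
    have e2 : (v-1/2)*(c-c')/((v-c)*(v-c')) ≤ ε := by
      have h15 := mul_le_mul_of_nonneg_left q hε.le
      rw [div_le_iff₀ (by positivity)]
      nlinarith
    have real : (v-1/2)/(v-c) ≤ (v-1/2)/(v-c') + ε := by linarith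
    calc ENNReal.ofReal ((v-1/2)/(v-c)) ≤ ENNReal.ofReal ((v-1/2)/(v-c') + ε) :=
          ENNReal.ofReal_le_ofReal real
      _ ≤ ENNReal.ofReal ((v-1/2)/(v-c')) + ENNReal.ofReal ε := ENNReal.ofReal_add_le
  · apply sing_zero
    intro ε hε
    refine ⟨(1/2 + c)/2, by linarith, ?_⟩
    rw [hF c, hF ((1/2 + c)/2), if_neg (not_lt.2 hc.le), if_neg (by push_neg; linarith),
      if_neg (by push_neg; linarith), if_neg (by push_neg; linarith)]
    exact le_self_add

include hF in
lemma Fiio0 : μF (Set.Iio (0:ℝ)) = 0 := by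
  have hsub : Set.Iio (0:ℝ) ⊆ ⋃ n : ℕ, Set.Iic (-(1/(n+1))) := by
    intro y hy
    simp only [Set.mem_Iio] at hy
    simp only [Set.mem_iUnion, Set.mem_Iic]
    obtain ⟨n, hn⟩ := exists_nat_one_div_lt (K := ℝ) (neg_pos.2 hy)
    exact ⟨n, by linarith⟩
  apply measure_mono_null hsub
  apply measure_iUnion_null
  intro n
  rw [hF, if_pos]
  have : (0:ℝ) < 1/(n+1) := by positivity
  linarith

include hG in
lemma Giio0 : μG (Set.Iio (0:ℝ)) = 0 := by
  apply measure_mono_null _ (Giic0 hG)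
  intro z hz
  simp only [Set.mem_Iio] at hz
  exact le_of_lt hz

include hv hF in
lemma Fiic_half : μF (Set.Iic (1/2:ℝ)) = 1 := by
  rw [hF]
  rw [if_neg (by norm_num), if_pos le_rfl, div_self (by linarith : v - 1/2 ≠ 0)]
  simp

include hv hF in
lemma Fioi_half : μF (Set.Ioi (1/2:ℝ)) = 0 := by
  rw [← Set.compl_Iic, prob_compl_eq_one_sub measurableSet_Iic, Fiic_half hv hF]
  simp

include hG in
lemma Giic_half : μG (Set.Iic (1/2:ℝ)) = 1 := by
  rw [hG]
  norm_num

include hG in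
lemma Gioi_half : μG (Set.Ioi (1/2:ℝ)) = 0 := by
  rw [← Set.compl_Iic, prob_compl_eq_one_sub measurableSet_Iic, Giic_half hG]
  simp

include hv hF in
lemma Fatom : μF {(0:ℝ)} = ENNReal.ofReal (1 - 1/(2*v)) := by
  have h1 : μF (Set.Iic (0:ℝ)) = μF {(0:ℝ)} := by
    refine le_antisymm ?_ (measure_mono ?_)
    swap
    · intro z hz
      rw [Set.mem_singleton_iff] at hz
      subst hz
      exact Set.mem_Iic.2 le_rfl
    have : Set.Iic (0:ℝ) ⊆ Set.Iio 0 ∪ {0} := by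
      intro z hz
      simp only [Set.mem_Iic] at hz
      rcases lt_or_eq_of_le hz with h | h
      · exact Or.inl h
      · exact Or.inr (by simp [h])
    calc μF (Set.Iic (0:ℝ)) ≤ μF (Set.Iio 0 ∪ {0}) := measure_mono this
      _ ≤ μF (Set.Iio 0) + μF {0} := measure_union_le _ _
      _ = μF {0} := by rw [Fiio0 hF, zero_add]
  rw [← h1, hF, if_neg (lt_irrefl _), if_pos (by norm_num)]
  congr 1
  have hv0 : (0:ℝ) < v := by linarith
  rw [sub_zero, eq_sub_iff_add_eq, div_add_div _ _ hv0.ne' (by positivity), div_eq_one_iff_eq (by positivity)]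
  ring

-- toReal values
include hv hF in
lemma FFval (M : ℝ) (h0 : 0 ≤ M) (h2 : M ≤ 1/2) :
    (μF (Set.Iic M)).toReal = (v-1/2)/(v-M) := by
  rw [hF, if_neg (not_lt.2 h0), if_pos h2, ENNReal.toReal_ofReal]
  apply div_nonneg <;> linarith

include hG in
lemma GGval (p : ℝ) (h0 : 0 ≤ p) (h2 : p ≤ 1/2) :
    (μG (Set.Iic p)).toReal = p/(1-p) := by
  rw [hG, if_neg (not_lt.2 h0), if_pos h2, ENNReal.toReal_ofReal]
  apply div_nonneg <;> linarith

lemma toReal_le_one {μ : Measure ℝ} [IsProbabilityMeasure μ] (s : Set ℝ) :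
    (μ s).toReal ≤ 1 := by
  have h := prob_le_one (μ := μ) (s := s)
  have h1 := ENNReal.toReal_mono ENNReal.one_ne_top h
  simpa using h1

include hG in
lemma GGkey (p : ℝ) (h0 : 0 ≤ p) : (μG (Set.Iic p)).toReal * (1-p) ≤ p := by
  rcases le_or_gt p (1/2) with h2 | h2
  · rw [GGval hG p h0 h2, div_mul_cancel₀ _ (by linarith : (1:ℝ) - p ≠ 0)]
  · have hle := toReal_le_one (μ := μG) (Set.Iic p)
    have hnn := ENNReal.toReal_nonneg (a := μG (Set.Iic p))
    nlinarith

include hv hF in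
lemma FFbound (M : ℝ) (h0 : 0 ≤ M) :
    (μF (Set.Iic M)).toReal * max (v-M) 0 ≤ v - 1/2 := by
  rcases le_or_gt M (1/2) with h2 | h2
  · rw [FFval hv hF M h0 h2, max_eq_left (by linarith : (0:ℝ) ≤ v - M),
      div_mul_cancel₀ _ (by linarith : v - M ≠ 0)]
  · have hle := toReal_le_one (μ := μF) (Set.Iic M)
    have hnn := ENNReal.toReal_nonneg (a := μF (Set.Iic M))
    rcases max_cases (v - M) 0 with ⟨hm, _⟩ | ⟨hm, _⟩ <;> rw [hm] <;> nlinarith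

include hv hF in
lemma FFeq (x : ℝ) (h0 : 0 ≤ x) (h2 : x ≤ 1/2) :
    (μF (Set.Iic x)).toReal * (v - x) = v - 1/2 := by
  rw [FFval hv hF x h0 h2, div_mul_cancel₀ _ (by linarith : v - x ≠ 0)]

include hG in
lemma GGeq (y : ℝ) (h0 : 0 ≤ y) (h2 : y ≤ 1/2) :
    (μG (Set.Iic y)).toReal * (1 - y) = y := by
  rw [GGval hG y h0 h2, div_mul_cancel₀ _ (by linarith : (1:ℝ) - y ≠ 0)]

end CDF
end AndOr

namespace AndOr
noncomputable section

def cst : ℝ → (Fin 2 → ℝ) := fun y _ => y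
def load0 : ℝ → (Fin 2 → ℝ) := fun x => ![x, 0]
def load1 : ℝ → (Fin 2 → ℝ) := fun x => ![0, x]
def pair2 : (Fin 2 → ℝ) × (Fin 2 → ℝ) → (Fin 2 → Fin 2 → ℝ) := fun p => ![p.1, p.2]
def Phi0 : ℝ × ℝ → (Fin 2 → Fin 2 → ℝ) := fun p => ![cst p.1, load0 p.2]
def Phi1 : ℝ × ℝ → (Fin 2 → Fin 2 → ℝ) := fun p => ![cst p.1, load1 p.2]

lemma meas_cst : Measurable cst := measurable_pi_lambda _ fun _ => measurable_id

lemma meas_load0 : Measurable load0 := by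
  apply measurable_pi_lambda
  intro j; fin_cases j
  · simpa [load0] using measurable_id'
  · simpa [load0] using measurable_const

lemma meas_load1 : Measurable load1 := by
  apply measurable_pi_lambda
  intro j; fin_cases j
  · simpa [load1] using measurable_const
  · simpa [load1] using measurable_id'

lemma meas_pair2 : Measurable pair2 := by
  apply measurable_pi_lambda
  intro j; fin_cases j
  · simpa [pair2] using measurable_fst
  · simpa [pair2] using measurable_snd

lemma meas_Phi0 : Measurable Phi0 :=
  meas_pair2.comp ((meas_cst.comp measurable_fst).prodMk (meas_load0.comp measurable_snd))

lemma meas_Phi1 : Measurable Phi1 :=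
  meas_pair2.comp ((meas_cst.comp measurable_fst).prodMk (meas_load1.comp measurable_snd))

lemma prod_smul_right {α β : Type*} [MeasurableSpace α] [MeasurableSpace β]
    (μ : Measure α) (ν : Measure β) [SFinite μ] [SFinite ν] (c : ENNReal) (hc : c ≠ ⊤) :
    μ.prod (c • ν) = c • μ.prod ν := by
  ext s hs
  rw [Measure.prod_apply hs, Measure.smul_apply, Measure.prod_apply hs]
  simp only [Measure.smul_apply, smul_eq_mul]
  rw [lintegral_const_mul' _ _ hc]

lemma pi_two (σ : Fin 2 → Measure (Fin 2 → ℝ)) (hsf : ∀ i, SigmaFinite (σ i)) :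
    Measure.pi σ = ((σ 0).prod (σ 1)).map pair2 := by
  haveI := hsf
  have h := measurePreserving_piFinTwo (α := fun _ => (Fin 2 → ℝ)) σ
  have h2 : ⇑(MeasurableEquiv.piFinTwo fun _ : Fin 2 => (Fin 2 → ℝ)).symm = pair2 := by
    funext p j
    fin_cases j <;> rfl
  calc Measure.pi σ
      = ((Measure.pi σ).map (MeasurableEquiv.piFinTwo fun _ : Fin 2 => (Fin 2 → ℝ))).map
          (MeasurableEquiv.piFinTwo fun _ : Fin 2 => (Fin 2 → ℝ)).symm :=
        (MeasurableEquiv.map_symm_map _).symm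
    _ = ((σ 0).prod (σ 1)).map (MeasurableEquiv.piFinTwo fun _ : Fin 2 => (Fin 2 → ℝ)).symm := by
        rw [h.map_eq]
    _ = ((σ 0).prod (σ 1)).map pair2 := by rw [h2]

section Decomp
variable {μF μG : Measure ℝ} [IsProbabilityMeasure μF] [IsProbabilityMeasure μG]
variable {σ : Fin 2 → Measure (Fin 2 → ℝ)}
variable (hσ0 : σ 0 = μF.map cst)
variable (hσ1 : σ 1 = (1 / 2 : ENNReal) • μG.map load0 + (1 / 2 : ENNReal) • μG.map load1)

include hσ0 in
lemma sigma0_prob : IsProbabilityMeasure (σ 0) := by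
  rw [hσ0]; exact Measure.isProbabilityMeasure_map meas_cst.aemeasurable

include hσ1 in
lemma sigma1_prob : IsProbabilityMeasure (σ 1) := by
  haveI h0 : IsProbabilityMeasure (μG.map load0) := Measure.isProbabilityMeasure_map meas_load0.aemeasurable
  haveI h1 : IsProbabilityMeasure (μG.map load1) := Measure.isProbabilityMeasure_map meas_load1.aemeasurable
  constructor
  rw [hσ1]
  simp [Measure.add_apply, Measure.smul_apply, measure_univ]
  exact ENNReal.inv_two_add_inv_two

include hσ0 hσ1 in
lemma pi_path : Measure.pi σ =
    (1 / 2 : ENNReal) • (μF.prod μG).map Phi0 + (1 / 2 : ENNReal) • (μF.prod μG).map Phi1 := by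
  haveI i0 := sigma0_prob hσ0
  haveI i1 := sigma1_prob hσ1
  have hsf : ∀ i, SigmaFinite (σ i) := by
    intro i; fin_cases i
    · show SigmaFinite (σ 0); infer_instance
    · show SigmaFinite (σ 1); infer_instance
  rw [pi_two σ hsf, hσ0, hσ1, Measure.prod_add,
    prod_smul_right _ _ _ (by norm_num), prod_smul_right _ _ _ (by norm_num),
    Measure.map_add _ _ meas_pair2, Measure.map_smul, Measure.map_smul,
    Measure.map_prod_map _ _ meas_cst meas_load0, Measure.map_prod_map _ _ meas_cst meas_load1,
    Measure.map_map meas_pair2 (meas_cst.prodMap meas_load0),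
    Measure.map_map meas_pair2 (meas_cst.prodMap meas_load1)]
  rfl

include hσ1 in
lemma pi_dev0 (B : Fin 2 → ℝ) :
    Measure.pi (Function.update σ 0 (Measure.dirac B)) =
      (1 / 2 : ENNReal) • μG.map (fun x => ![B, load0 x]) +
      (1 / 2 : ENNReal) • μG.map (fun x => ![B, load1 x]) := by
  haveI i1 := sigma1_prob hσ1
  have hsf : ∀ i, SigmaFinite ((Function.update σ 0 (Measure.dirac B)) i) := by
    intro i; fin_cases i
    · show SigmaFinite ((Function.update σ 0 (Measure.dirac B)) 0)
      rw [Function.update_self]; infer_instance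
    · show SigmaFinite ((Function.update σ 0 (Measure.dirac B)) 1)
      rw [Function.update_of_ne (by decide)]; infer_instance
  rw [pi_two _ hsf, Function.update_self, Function.update_of_ne (by decide), hσ1,
    Measure.prod_add, prod_smul_right _ _ _ (by norm_num), prod_smul_right _ _ _ (by norm_num),
    Measure.map_add _ _ meas_pair2, Measure.map_smul, Measure.map_smul,
    Measure.dirac_prod, Measure.dirac_prod,
    Measure.map_map (by exact measurable_prodMk_left) meas_load0,
    Measure.map_map (by exact measurable_prodMk_left) meas_load1,
    Measure.map_map meas_pair2 (measurable_prodMk_left.comp meas_load0),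
    Measure.map_map meas_pair2 (measurable_prodMk_left.comp meas_load1)]
  rfl

include hσ0 in
lemma pi_dev1 (B : Fin 2 → ℝ) :
    Measure.pi (Function.update σ 1 (Measure.dirac B)) =
      μF.map (fun y => ![cst y, B]) := by
  haveI i0 := sigma0_prob hσ0
  have hsf : ∀ i, SigmaFinite ((Function.update σ 1 (Measure.dirac B)) i) := by
    intro i; fin_cases i
    · show SigmaFinite ((Function.update σ 1 (Measure.dirac B)) 0)
      rw [Function.update_of_ne (by decide)]; infer_instance
    · show SigmaFinite ((Function.update σ 1 (Measure.dirac B)) 1)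
      rw [Function.update_self]; infer_instance
  rw [pi_two _ hsf, Function.update_self, Function.update_of_ne (by decide), hσ0,
    Measure.prod_dirac,
    Measure.map_map (by exact measurable_prodMk_right) meas_cst,
    Measure.map_map meas_pair2 (measurable_prodMk_right.comp meas_cst)]
  rfl

end Decomp
end
end AndOr

namespace AndOr
noncomputable section

lemma integrable_of_bounded {α : Type*} [MeasurableSpace α] {μ : Measure α} [IsFiniteMeasure μ]
    {f : α → ℝ} (hm : AEStronglyMeasurable f μ) {C : ℝ} (h : ∀ a, |f a| ≤ C) :
    Integrable f μ :=
  ⟨hm, HasFiniteIntegral.of_bounded (C := C)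
    (Filter.Eventually.of_forall (fun a => by simpa [Real.norm_eq_abs] using h a))⟩

lemma integral_step (μ : Measure ℝ) [IsProbabilityMeasure μ] (p c1 c2 : ℝ) :
    ∫ x, (if x ≤ p then c1 else c2) ∂μ
      = (μ (Set.Iic p)).toReal * c1 + (1 - (μ (Set.Iic p)).toReal) * c2 := by
  have h : (fun x => if x ≤ p then c1 else c2)
      = fun x => (Set.Iic p).indicator (fun _ => c1 - c2) x + c2 := by
    funext x
    by_cases hx : x ≤ p
    · simp [Set.indicator_apply, Set.mem_Iic, hx]
    · simp [Set.indicator_apply, Set.mem_Iic, hx]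
  rw [h, integral_add ((integrable_const _).indicator measurableSet_Iic) (integrable_const _),
    integral_indicator_const _ measurableSet_Iic, integral_const]
  simp only [measureReal_def]
  simp [measure_univ]
  ring

section CDF2
variable {v : ℝ} {μF μG : Measure ℝ} [IsProbabilityMeasure μF] [IsProbabilityMeasure μG]
variable (hv : 1 / 2 < v)
variable (hF : ∀ y : ℝ, μF (Set.Iic y) =
      if y < 0 then 0 else if y ≤ 1 / 2 then ENNReal.ofReal ((v - 1 / 2) / (v - y)) else 1)
variable (hG : ∀ x : ℝ, μG (Set.Iic x) =
      if x < 0 then 0 else if x ≤ 1 / 2 then ENNReal.ofReal (x / (1 - x)) else 1)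

include hG in
lemma Gicc : μG (Set.Icc (0:ℝ) (1/2)) = 1 := by
  rw [← prob_compl_eq_zero_iff measurableSet_Icc]
  apply measure_mono_null _ (measure_union_null (Giio0 hG) (Gioi_half hG))
  intro z hz
  simp only [Set.mem_compl_iff, Set.mem_Icc, not_and_or, not_le] at hz
  simpa only [Set.mem_union, Set.mem_Iio, Set.mem_Ioi] using hz

include hG in
lemma int_w0 (y : ℝ) :
    ∫ x, (if 0 ≤ y ∧ y ≤ 1/2 then (if x ≤ y then 1 - 2*y else -y) else 0) ∂μG = 0 := by
  by_cases hy : 0 ≤ y ∧ y ≤ 1/2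
  · simp only [if_pos hy]
    rw [integral_step]
    have h := GGeq hG y hy.1 hy.2
    linear_combination h
  · simp only [if_neg hy, integral_zero]

include hv hF in
lemma int_w1_inner (x : ℝ) :
    ∫ y, (if 0 ≤ x ∧ x ≤ 1/2 then (if y ≤ x then v - x else 0) else 0) ∂μF
      = (if 0 ≤ x ∧ x ≤ 1/2 then v - 1/2 else 0) := by
  by_cases hx : 0 ≤ x ∧ x ≤ 1/2
  · simp only [if_pos hx]
    rw [integral_step]
    have h := FFeq hv hF x hx.1 hx.2
    linear_combination h
  · simp only [if_neg hx, integral_zero]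

include hv hG in
lemma int_w1_outer :
    ∫ x, (if 0 ≤ x ∧ x ≤ 1/2 then v - 1/2 else 0) ∂μG = v - 1/2 := by
  have h : (fun x => if 0 ≤ x ∧ x ≤ 1/2 then v - 1/2 else 0)
      = fun x => (Set.Icc (0:ℝ) (1/2)).indicator (fun _ => v - 1/2) x := by
    funext x
    by_cases hx : 0 ≤ x ∧ x ≤ 1/2
    · simp [Set.indicator_apply, Set.mem_Icc, hx]
    · simp [Set.indicator_apply, Set.mem_Icc, hx]
  rw [h, integral_indicator_const _ measurableSet_Icc, measureReal_def, Gicc hG]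
  simp

include hG in
lemma int_phi (p q : ℝ) (hp : 0 ≤ p) (hq : 0 ≤ q) : ∫ x, phi x p q ∂μG ≤ p - q := by
  by_cases hq' : 0 < q
  · simp only [phi, if_pos hq']
    rw [integral_step]
    nlinarith [GGkey hG p hp, toReal_le_one (μ := μG) (Set.Iic p),
      ENNReal.toReal_nonneg (a := μG (Set.Iic p))]
  · have hq0 : q = 0 := le_antisymm (not_lt.1 hq') hq
    simp only [phi, if_neg hq']
    rw [integral_step]
    rcases le_or_gt (1-p) 0 with h1 | h1
    · rw [max_eq_right h1]
      nlinarith [ENNReal.toReal_nonneg (a := μG (Set.Iic p))]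
    · rw [max_eq_left h1.le]
      nlinarith [GGkey hG p hp]

lemma phi_abs (x p q : ℝ) (hp : 0 ≤ p) (hq : 0 ≤ q) : |phi x p q| ≤ 1 + p + q := by
  rw [phi]
  rcases le_or_gt (1-p) 0 with h1 | h1
  · split_ifs <;> rw [abs_le] <;> constructor <;>
      first
        | linarith
        | (rw [max_eq_right h1]; linarith)
        | (rcases max_cases (1-p) (0:ℝ) with ⟨hm,_⟩ | ⟨hm,_⟩ <;> rw [hm] <;> linarith)
  · split_ifs <;> rw [abs_le] <;> constructor <;>
      first
        | linarith
        | (rcases max_cases (1-p) (0:ℝ) with ⟨hm,_⟩ | ⟨hm,_⟩ <;> rw [hm] <;> linarith)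

include hv hF in
lemma int_devOR (M : ℝ) (hM : 0 ≤ M) :
    ∫ y, (if y ≤ M then max (v - M) 0 else 0) ∂μF ≤ v - 1/2 := by
  rw [integral_step]
  have h := FFbound hv hF M hM
  linarith

end CDF2
end
end AndOr

namespace AndOr
noncomputable section

def W0 : (Fin 2 → Fin 2 → ℝ) → ℝ := fun b =>
  if 0 ≤ b 0 0 ∧ b 0 0 ≤ 1/2 then
    (if b 1 0 + b 1 1 ≤ b 0 0 then 1 - 2*(b 0 0) else -(b 0 0)) else 0

def W1 (v : ℝ) : (Fin 2 → Fin 2 → ℝ) → ℝ := fun b =>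
  if 0 ≤ b 1 0 + b 1 1 ∧ b 1 0 + b 1 1 ≤ 1/2 then
    (if b 0 0 ≤ b 1 0 + b 1 1 then v - (b 1 0 + b 1 1) else 0) else 0

def gA (B : Fin 2 → ℝ) : (Fin 2 → Fin 2 → ℝ) → ℝ := fun b =>
  if 0 < b 1 0 then phi (b 1 0) (B 0) (B 1) else phi (b 1 1) (B 1) (B 0)

def gB (v : ℝ) (B : Fin 2 → ℝ) : (Fin 2 → Fin 2 → ℝ) → ℝ := fun b =>
  if b 0 0 ≤ max (B 0) (B 1) then max (v - max (B 0) (B 1)) 0 else 0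

lemma meas_coord (i j : Fin 2) : Measurable fun b : Fin 2 → Fin 2 → ℝ => b i j :=
  (measurable_pi_apply j).comp (measurable_pi_apply i)

lemma meas_W0 : Measurable W0 := by
  apply Measurable.ite
  · exact (measurableSet_le measurable_const (meas_coord 0 0)).inter
      (measurableSet_le (meas_coord 0 0) measurable_const)
  · apply Measurable.ite
    · exact measurableSet_le ((meas_coord 1 0).add (meas_coord 1 1)) (meas_coord 0 0)
    · exact measurable_const.sub ((meas_coord 0 0).const_mul 2)
    · exact (meas_coord 0 0).neg
  · exact measurable_const

lemma meas_W1 (v : ℝ) : Measurable (W1 v) := by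
  apply Measurable.ite
  · exact (measurableSet_le measurable_const ((meas_coord 1 0).add (meas_coord 1 1))).inter
      (measurableSet_le ((meas_coord 1 0).add (meas_coord 1 1)) measurable_const)
  · apply Measurable.ite
    · exact measurableSet_le (meas_coord 0 0) ((meas_coord 1 0).add (meas_coord 1 1))
    · exact measurable_const.sub ((meas_coord 1 0).add (meas_coord 1 1))
    · exact measurable_const
  · exact measurable_const

lemma meas_phi (p q : ℝ) : Measurable (fun x => phi x p q) := by
  unfold phi
  by_cases hq : 0 < q
  · simp only [if_pos hq]
    exact Measurable.ite (measurableSet_le measurable_id measurable_const)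
      measurable_const measurable_const
  · simp only [if_neg hq]
    exact Measurable.ite (measurableSet_le measurable_id measurable_const)
      measurable_const measurable_const

lemma meas_gA (B : Fin 2 → ℝ) : Measurable (gA B) :=
  Measurable.ite (measurableSet_lt measurable_const (meas_coord 1 0))
    ((meas_phi (B 0) (B 1)).comp (meas_coord 1 0))
    ((meas_phi (B 1) (B 0)).comp (meas_coord 1 1))

lemma meas_gB (v : ℝ) (B : Fin 2 → ℝ) : Measurable (gB v B) :=
  Measurable.ite (measurableSet_le (meas_coord 0 0) measurable_const)
    measurable_const measurable_const

lemma W0_abs (b : Fin 2 → Fin 2 → ℝ) : |W0 b| ≤ 1 := by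
  unfold W0
  split_ifs with h1 h2 <;> rw [abs_le] <;> constructor <;> try linarith [h1.1, h1.2]
  · norm_num
  · norm_num

lemma W1_abs (v : ℝ) (b : Fin 2 → Fin 2 → ℝ) : |W1 v b| ≤ |v| + 1 := by
  have h1 := abs_nonneg v
  have h2 := le_abs_self v
  have h3 := neg_abs_le v
  unfold W1
  split_ifs with g1 g2 <;> rw [abs_le] <;> constructor <;> try linarith [g1.1, g1.2]
  · linarith
  · linarith

lemma gA_abs (B : Fin 2 → ℝ) (hB : ∀ j, 0 ≤ B j) (b : Fin 2 → Fin 2 → ℝ) :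
    |gA B b| ≤ 1 + B 0 + B 1 := by
  unfold gA
  split_ifs
  · exact phi_abs _ _ _ (hB 0) (hB 1)
  · have := phi_abs (b 1 1) (B 1) (B 0) (hB 1) (hB 0)
    linarith

lemma gB_abs (v : ℝ) (B : Fin 2 → ℝ) (hB : ∀ j, 0 ≤ B j) (b : Fin 2 → Fin 2 → ℝ) :
    |gB v B b| ≤ |v| + 1 := by
  have h2 := le_abs_self v
  have hM : 0 ≤ max (B 0) (B 1) := le_trans (hB 0) (le_max_left _ _)
  unfold gB
  split_ifs <;> rw [abs_le] <;> constructor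
  · have := abs_nonneg v; linarith [le_max_right (v - max (B 0) (B 1)) (0:ℝ)]
  · rcases max_cases (v - max (B 0) (B 1)) (0:ℝ) with ⟨hm,_⟩ | ⟨hm,_⟩ <;> rw [hm] <;>
      [linarith; positivity]
  · have := abs_nonneg v; linarith
  · have := abs_nonneg v; linarith

-- composition identities
lemma Phi0_coords (p : ℝ × ℝ) :
    Phi0 p 0 0 = p.1 ∧ Phi0 p 0 1 = p.1 ∧ Phi0 p 1 0 = p.2 ∧ Phi0 p 1 1 = 0 := by
  refine ⟨rfl, rfl, rfl, rfl⟩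

lemma Phi1_coords (p : ℝ × ℝ) :
    Phi1 p 0 0 = p.1 ∧ Phi1 p 0 1 = p.1 ∧ Phi1 p 1 0 = 0 ∧ Phi1 p 1 1 = p.2 := by
  refine ⟨rfl, rfl, rfl, rfl⟩

lemma W0_Phi0 (p : ℝ × ℝ) : W0 (Phi0 p) =
    if 0 ≤ p.1 ∧ p.1 ≤ 1/2 then (if p.2 ≤ p.1 then 1 - 2*p.1 else -p.1) else 0 := by
  obtain ⟨h1, h2, h3, h4⟩ := Phi0_coords p
  simp only [W0, h1, h2, h3, h4, add_zero]

lemma W0_Phi1 (p : ℝ × ℝ) : W0 (Phi1 p) =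
    if 0 ≤ p.1 ∧ p.1 ≤ 1/2 then (if p.2 ≤ p.1 then 1 - 2*p.1 else -p.1) else 0 := by
  obtain ⟨h1, h2, h3, h4⟩ := Phi1_coords p
  simp only [W0, h1, h2, h3, h4, zero_add]

lemma W1_Phi0 (v : ℝ) (p : ℝ × ℝ) : W1 v (Phi0 p) =
    if 0 ≤ p.2 ∧ p.2 ≤ 1/2 then (if p.1 ≤ p.2 then v - p.2 else 0) else 0 := by
  obtain ⟨h1, h2, h3, h4⟩ := Phi0_coords p
  simp only [W1, h1, h2, h3, h4, add_zero]

lemma W1_Phi1 (v : ℝ) (p : ℝ × ℝ) : W1 v (Phi1 p) =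
    if 0 ≤ p.2 ∧ p.2 ≤ 1/2 then (if p.1 ≤ p.2 then v - p.2 else 0) else 0 := by
  obtain ⟨h1, h2, h3, h4⟩ := Phi1_coords p
  simp only [W1, h1, h2, h3, h4, zero_add]

end
end AndOr

namespace AndOr
noncomputable section

def BadP : Set (ℝ × ℝ) := {p | p.1 < 0 ∨ 1/2 < p.1 ∨ p.2 ≤ 0 ∨ 1/2 < p.2 ∨ p.2 = p.1}

def GoodP : Set (Fin 2 → Fin 2 → ℝ) :=
  {b | (0 ≤ b 0 0 ∧ b 0 0 ≤ 1/2 ∧ b 0 1 = b 0 0) ∧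
       ((0 < b 1 0 ∧ b 1 0 ≤ 1/2 ∧ b 1 1 = 0) ∨ (b 1 0 = 0 ∧ 0 < b 1 1 ∧ b 1 1 ≤ 1/2)) ∧
       b 1 0 + b 1 1 ≠ b 0 0}

lemma meas_GoodP : MeasurableSet GoodP := by
  unfold GoodP
  simp only [Set.setOf_and, Set.setOf_or, ne_eq]
  refine MeasurableSet.inter (MeasurableSet.inter ?_ (MeasurableSet.inter ?_ ?_))
    (MeasurableSet.inter (MeasurableSet.union
      (MeasurableSet.inter ?_ (MeasurableSet.inter ?_ ?_))
      (MeasurableSet.inter ?_ (MeasurableSet.inter ?_ ?_))) ?_)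
  · exact measurableSet_le measurable_const (meas_coord 0 0)
  · exact measurableSet_le (meas_coord 0 0) measurable_const
  · exact measurableSet_eq_fun (meas_coord 0 1) (meas_coord 0 0)
  · exact measurableSet_lt measurable_const (meas_coord 1 0)
  · exact measurableSet_le (meas_coord 1 0) measurable_const
  · exact measurableSet_eq_fun (meas_coord 1 1) measurable_const
  · exact measurableSet_eq_fun (meas_coord 1 0) measurable_const
  · exact measurableSet_lt measurable_const (meas_coord 1 1)
  · exact measurableSet_le (meas_coord 1 1) measurable_const
  · rw [← Set.compl_setOf]
    exact (measurableSet_eq_fun ((meas_coord 1 0).add (meas_coord 1 1)) (meas_coord 0 0)).compl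

def GA (B : Fin 2 → ℝ) : Set (Fin 2 → Fin 2 → ℝ) :=
  {b | b 0 0 = B 0 ∧ b 0 1 = B 1 ∧
       ((0 < b 1 0 ∧ b 1 1 = 0 ∧ b 1 0 ≠ B 0) ∨ (b 1 0 = 0 ∧ 0 < b 1 1 ∧ b 1 1 ≠ B 1))}

lemma meas_GA (B : Fin 2 → ℝ) : MeasurableSet (GA B) := by
  unfold GA
  simp only [Set.setOf_and, Set.setOf_or, ne_eq]
  refine MeasurableSet.inter ?_ (MeasurableSet.inter ?_ (MeasurableSet.union
    (MeasurableSet.inter ?_ (MeasurableSet.inter ?_ ?_))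
    (MeasurableSet.inter ?_ (MeasurableSet.inter ?_ ?_))))
  · exact measurableSet_eq_fun (meas_coord 0 0) measurable_const
  · exact measurableSet_eq_fun (meas_coord 0 1) measurable_const
  · exact measurableSet_lt measurable_const (meas_coord 1 0)
  · exact measurableSet_eq_fun (meas_coord 1 1) measurable_const
  · rw [← Set.compl_setOf]
    exact (measurableSet_eq_fun (meas_coord 1 0) measurable_const).compl
  · exact measurableSet_eq_fun (meas_coord 1 0) measurable_const
  · exact measurableSet_lt measurable_const (meas_coord 1 1)
  · rw [← Set.compl_setOf]
    exact (measurableSet_eq_fun (meas_coord 1 1) measurable_const).compl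

def GB (B : Fin 2 → ℝ) : Set (Fin 2 → Fin 2 → ℝ) :=
  {b | b 0 1 = b 0 0 ∧ b 1 0 = B 0 ∧ b 1 1 = B 1}

lemma meas_GB (B : Fin 2 → ℝ) : MeasurableSet (GB B) := by
  unfold GB
  simp only [Set.setOf_and]
  exact MeasurableSet.inter (measurableSet_eq_fun (meas_coord 0 1) (meas_coord 0 0))
    (MeasurableSet.inter (measurableSet_eq_fun (meas_coord 1 0) measurable_const)
      (measurableSet_eq_fun (meas_coord 1 1) measurable_const))

section M2
variable {v : ℝ} {μF μG : Measure ℝ} [IsProbabilityMeasure μF] [IsProbabilityMeasure μG]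
variable (hv : 1 / 2 < v)
variable (hF : ∀ y : ℝ, μF (Set.Iic y) =
      if y < 0 then 0 else if y ≤ 1 / 2 then ENNReal.ofReal ((v - 1 / 2) / (v - y)) else 1)
variable (hG : ∀ x : ℝ, μG (Set.Iic x) =
      if x < 0 then 0 else if x ≤ 1 / 2 then ENNReal.ofReal (x / (1 - x)) else 1)

include hv hF hG in
lemma rho_bad : (μF.prod μG) BadP = 0 := by
  have hdiag : (μF.prod μG) {p : ℝ × ℝ | p.2 = p.1} = 0 := by
    have hD : MeasurableSet {p : ℝ × ℝ | p.2 = p.1} :=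
      measurableSet_eq_fun measurable_snd measurable_fst
    rw [Measure.prod_apply hD]
    have h : ∀ y : ℝ, μG (Prod.mk y ⁻¹' {p : ℝ × ℝ | p.2 = p.1}) = 0 := by
      intro y
      have he : (Prod.mk y ⁻¹' {p : ℝ × ℝ | p.2 = p.1}) = {y} := by
        ext z
        simp [eq_comm]
      rw [he]
      exact Gsing hG y
    simp only [h]
    exact lintegral_zero
  have hsub : BadP ⊆ (Set.Iio 0 ×ˢ Set.univ) ∪ (Set.Ioi (1/2) ×ˢ Set.univ) ∪
      (Set.univ ×ˢ Set.Iic 0) ∪ (Set.univ ×ˢ Set.Ioi (1/2)) ∪ {p : ℝ × ℝ | p.2 = p.1} := by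
    intro p hp
    simp only [BadP, Set.mem_setOf_eq] at hp
    simp only [Set.mem_union, Set.mem_prod, Set.mem_Iio, Set.mem_Ioi, Set.mem_Iic,
      Set.mem_univ, and_true, true_and, Set.mem_setOf_eq]
    tauto
  apply measure_mono_null hsub
  refine measure_union_null (measure_union_null (measure_union_null (measure_union_null ?_ ?_) ?_) ?_) hdiag
  · rw [Measure.prod_prod, Fiio0 hF, zero_mul]
  · rw [Measure.prod_prod, Fioi_half hv hF, zero_mul]
  · rw [Measure.prod_prod, Giic0 hG, mul_zero]
  · rw [Measure.prod_prod, Gioi_half hG, mul_zero]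

variable {σ : Fin 2 → Measure (Fin 2 → ℝ)}
variable (hσ0 : σ 0 = μF.map cst)
variable (hσ1 : σ 1 = (1 / 2 : ENNReal) • μG.map load0 + (1 / 2 : ENNReal) • μG.map load1)

include hv hF hG hσ0 hσ1 in
lemma good_ae : (Measure.pi σ) GoodPᶜ = 0 := by
  rw [pi_path hσ0 hσ1, Measure.add_apply, Measure.smul_apply, Measure.smul_apply,
    Measure.map_apply meas_Phi0 meas_GoodP.compl, Measure.map_apply meas_Phi1 meas_GoodP.compl]
  have h0 : Phi0 ⁻¹' GoodPᶜ ⊆ BadP := by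
    intro p hp
    simp only [Set.mem_preimage, Set.mem_compl_iff] at hp
    by_contra hbad
    simp only [BadP, Set.mem_setOf_eq, not_or, not_lt, not_le] at hbad
    obtain ⟨k1, k2, k3, k4, k5⟩ := hbad
    obtain ⟨c1, c2, c3, c4⟩ := Phi0_coords p
    apply hp
    refine ⟨⟨by rw [c1]; exact k1, by rw [c1]; exact k2, by rw [c2, c1]⟩,
      Or.inl ⟨by rw [c3]; exact k3, by rw [c3]; exact k4, c4⟩, ?_⟩
    rw [c3, c4, c1, add_zero]
    exact k5
  have h1 : Phi1 ⁻¹' GoodPᶜ ⊆ BadP := by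
    intro p hp
    simp only [Set.mem_preimage, Set.mem_compl_iff] at hp
    by_contra hbad
    simp only [BadP, Set.mem_setOf_eq, not_or, not_lt, not_le] at hbad
    obtain ⟨k1, k2, k3, k4, k5⟩ := hbad
    obtain ⟨c1, c2, c3, c4⟩ := Phi1_coords p
    apply hp
    refine ⟨⟨by rw [c1]; exact k1, by rw [c1]; exact k2, by rw [c2, c1]⟩,
      Or.inr ⟨c3, by rw [c4]; exact k3, by rw [c4]; exact k4⟩, ?_⟩
    rw [c3, c4, c1, zero_add]
    exact k5
  rw [measure_mono_null h0 (rho_bad hv hF hG), measure_mono_null h1 (rho_bad hv hF hG)]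
  simp

lemma good_utility (T : TieRule (Fin 2) (Fin 2)) (v : ℝ) (b : Fin 2 → Fin 2 → ℝ)
    (hb : b ∈ GoodP) :
    utility (V v) T b 0 = W0 b ∧ utility (V v) T b 1 = W1 v b := by
  obtain ⟨⟨hy0, hy2, he⟩, hload, hne⟩ := hb
  rcases hload with ⟨hx0, hx2, h11⟩ | ⟨h10, hx0, hx2⟩
  · have hxy : b 1 0 ≠ b 0 0 := by
      intro h
      apply hne
      rw [h11, add_zero, h]
    have hp := path_utility T b v (b 0 0) (b 1 0) hy0 hxy hx0 rfl he (Or.inl ⟨rfl, h11⟩)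
    constructor
    · rw [hp.1]
      simp only [W0, h11, add_zero, if_pos (⟨hy0, hy2⟩ : 0 ≤ b 0 0 ∧ b 0 0 ≤ 1/2)]
    · rw [hp.2]
      simp only [W1, h11, add_zero, if_pos (⟨hx0.le, hx2⟩ : 0 ≤ b 1 0 ∧ b 1 0 ≤ 1/2)]
      rcases lt_or_gt_of_ne hxy with hlt | hgt
      · rw [if_pos hlt.le, if_neg (not_le.2 hlt)]
      · rw [if_neg (not_le.2 hgt), if_pos hgt.le]
  · have hxy : b 1 1 ≠ b 0 0 := by
      intro h
      apply hne
      rw [h10, zero_add, h]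
    have hp := path_utility T b v (b 0 0) (b 1 1) hy0 hxy hx0 rfl he (Or.inr ⟨h10, rfl⟩)
    constructor
    · rw [hp.1]
      simp only [W0, h10, zero_add, if_pos (⟨hy0, hy2⟩ : 0 ≤ b 0 0 ∧ b 0 0 ≤ 1/2)]
    · rw [hp.2]
      simp only [W1, h10, zero_add, if_pos (⟨hx0.le, hx2⟩ : 0 ≤ b 1 1 ∧ b 1 1 ≤ 1/2)]
      rcases lt_or_gt_of_ne hxy with hlt | hgt
      · rw [if_pos hlt.le, if_neg (not_le.2 hlt)]
      · rw [if_neg (not_le.2 hgt), if_pos hgt.le]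

lemma gA_mem (T : TieRule (Fin 2) (Fin 2)) (v : ℝ) (B : Fin 2 → ℝ) (hB : ∀ j, 0 ≤ B j)
    (b : Fin 2 → Fin 2 → ℝ) (hb : b ∈ GA B) :
    utility (V v) T b 0 ≤ gA B b := by
  obtain ⟨e0, e1, hcase⟩ := hb
  rcases hcase with ⟨hx0, h11, hne⟩ | ⟨h10, hx1, hne⟩
  · rw [gA, if_pos hx0]
    exact dev0_utility_le_left T b v B hB (b 1 0) e0 e1 rfl h11 hne
  · rw [gA, h10, if_neg (lt_irrefl 0)]
    exact dev0_utility_le_right T b v B hB (b 1 1) e0 e1 h10 rfl hne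

lemma gB_mem (T : TieRule (Fin 2) (Fin 2)) (v : ℝ) (B : Fin 2 → ℝ) (hB : ∀ j, 0 ≤ B j)
    (b : Fin 2 → Fin 2 → ℝ) (hb : b ∈ GB B) :
    utility (V v) T b 1 ≤ gB v B b := by
  obtain ⟨h00, h10, h11⟩ := hb
  exact dev1_utility_le T b v B hB h00 h10 h11

end M2
end
end AndOr

namespace AndOr
noncomputable section

lemma half_toReal : ((1:ENNReal)/2).toReal = (1:ℝ)/2 := by
  rw [ENNReal.toReal_div]
  norm_num

lemma meas_psi0 (B : Fin 2 → ℝ) :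
    Measurable (fun x : ℝ => (![B, load0 x] : Fin 2 → Fin 2 → ℝ)) :=
  meas_pair2.comp (measurable_const.prodMk meas_load0)

lemma meas_psi1 (B : Fin 2 → ℝ) :
    Measurable (fun x : ℝ => (![B, load1 x] : Fin 2 → Fin 2 → ℝ)) :=
  meas_pair2.comp (measurable_const.prodMk meas_load1)

lemma meas_psiF (B : Fin 2 → ℝ) :
    Measurable (fun y : ℝ => (![cst y, B] : Fin 2 → Fin 2 → ℝ)) :=
  meas_pair2.comp (meas_cst.prodMk measurable_const)

lemma meas_w0p : Measurable (fun p : ℝ × ℝ =>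
    if 0 ≤ p.1 ∧ p.1 ≤ 1/2 then (if p.2 ≤ p.1 then 1 - 2*p.1 else -p.1) else 0) := by
  apply Measurable.ite
  · exact (measurableSet_le measurable_const measurable_fst).inter
      (measurableSet_le measurable_fst measurable_const)
  · exact Measurable.ite (measurableSet_le measurable_snd measurable_fst)
      (measurable_const.sub (measurable_fst.const_mul 2)) measurable_fst.neg
  · exact measurable_const

lemma w0p_abs (p : ℝ × ℝ) :
    |if 0 ≤ p.1 ∧ p.1 ≤ 1/2 then (if p.2 ≤ p.1 then 1 - 2*p.1 else -p.1) else 0| ≤ 1 := by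
  split_ifs with h1 h2 <;> rw [abs_le] <;> constructor <;> try linarith [h1.1, h1.2]
  · norm_num
  · norm_num

lemma meas_w1p (v : ℝ) : Measurable (fun p : ℝ × ℝ =>
    if 0 ≤ p.2 ∧ p.2 ≤ 1/2 then (if p.1 ≤ p.2 then v - p.2 else 0) else 0) := by
  apply Measurable.ite
  · exact (measurableSet_le measurable_const measurable_snd).inter
      (measurableSet_le measurable_snd measurable_const)
  · exact Measurable.ite (measurableSet_le measurable_fst measurable_snd)
      (measurable_const.sub measurable_snd) measurable_const
  · exact measurable_const

lemma w1p_abs (v : ℝ) (p : ℝ × ℝ) :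
    |if 0 ≤ p.2 ∧ p.2 ≤ 1/2 then (if p.1 ≤ p.2 then v - p.2 else 0) else 0| ≤ |v| + 1 := by
  have h2 := le_abs_self v
  have h3 := neg_abs_le v
  have h4 := abs_nonneg v
  split_ifs with h1 g1 <;> rw [abs_le] <;> constructor <;> try linarith [h1.1, h1.2]
  · linarith
  · linarith

section M3
variable {v : ℝ} {μF μG : Measure ℝ} [IsProbabilityMeasure μF] [IsProbabilityMeasure μG]
variable (hv : 1 / 2 < v)
variable (hF : ∀ y : ℝ, μF (Set.Iic y) =
      if y < 0 then 0 else if y ≤ 1 / 2 then ENNReal.ofReal ((v - 1 / 2) / (v - y)) else 1)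
variable (hG : ∀ x : ℝ, μG (Set.Iic x) =
      if x < 0 then 0 else if x ≤ 1 / 2 then ENNReal.ofReal (x / (1 - x)) else 1)
variable {σ : Fin 2 → Measure (Fin 2 → ℝ)}
variable (hσ0 : σ 0 = μF.map cst)
variable (hσ1 : σ 1 = (1 / 2 : ENNReal) • μG.map load0 + (1 / 2 : ENNReal) • μG.map load1)

include hv hF hG hσ0 hσ1 in
lemma EU_path0 (T : TieRule (Fin 2) (Fin 2)) : expectedUtility (V v) T σ 0 = 0 := by
  haveI i0 := sigma0_prob hσ0
  haveI i1 := sigma1_prob hσ1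
  haveI iP0 : IsProbabilityMeasure ((μF.prod μG).map Phi0) :=
    Measure.isProbabilityMeasure_map meas_Phi0.aemeasurable
  haveI iP1 : IsProbabilityMeasure ((μF.prod μG).map Phi1) :=
    Measure.isProbabilityMeasure_map meas_Phi1.aemeasurable
  have hae : (fun b => utility (V v) T b 0) =ᵐ[Measure.pi σ] W0 := by
    rw [Filter.EventuallyEq, ae_iff]
    apply measure_mono_null _ (good_ae hv hF hG hσ0 hσ1)
    intro b hb
    simp only [Set.mem_setOf_eq] at hb
    exact fun hg => hb ((good_utility T v b hg).1)
  rw [expectedUtility, integral_congr_ae hae, pi_path hσ0 hσ1]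
  have hi0 : Integrable W0 (((1:ENNReal)/2) • (μF.prod μG).map Phi0) :=
    (integrable_of_bounded meas_W0.aestronglyMeasurable W0_abs).smul_measure (by norm_num)
  have hi1 : Integrable W0 (((1:ENNReal)/2) • (μF.prod μG).map Phi1) :=
    (integrable_of_bounded meas_W0.aestronglyMeasurable W0_abs).smul_measure (by norm_num)
  rw [integral_add_measure hi0 hi1, integral_smul_measure, integral_smul_measure,
    integral_map meas_Phi0.aemeasurable meas_W0.aestronglyMeasurable,
    integral_map meas_Phi1.aemeasurable meas_W0.aestronglyMeasurable]
  have hint : Integrable (fun p : ℝ × ℝ =>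
      if 0 ≤ p.1 ∧ p.1 ≤ 1/2 then (if p.2 ≤ p.1 then 1 - 2*p.1 else -p.1) else 0)
      (μF.prod μG) := integrable_of_bounded meas_w0p.aestronglyMeasurable w0p_abs
  have e0 : ∫ p, W0 (Phi0 p) ∂(μF.prod μG) = 0 := by
    simp only [W0_Phi0]
    rw [MeasureTheory.integral_prod _ hint]
    simp only [int_w0 hG]
    exact integral_zero _ _
  have e1 : ∫ p, W0 (Phi1 p) ∂(μF.prod μG) = 0 := by
    simp only [W0_Phi1]
    rw [MeasureTheory.integral_prod _ hint]
    simp only [int_w0 hG]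
    exact integral_zero _ _
  rw [e0, e1]
  simp

include hv hF hG hσ0 hσ1 in
lemma EU_path1 (T : TieRule (Fin 2) (Fin 2)) : expectedUtility (V v) T σ 1 = v - 1/2 := by
  haveI i0 := sigma0_prob hσ0
  haveI i1 := sigma1_prob hσ1
  haveI iP0 : IsProbabilityMeasure ((μF.prod μG).map Phi0) :=
    Measure.isProbabilityMeasure_map meas_Phi0.aemeasurable
  haveI iP1 : IsProbabilityMeasure ((μF.prod μG).map Phi1) :=
    Measure.isProbabilityMeasure_map meas_Phi1.aemeasurable
  have hae : (fun b => utility (V v) T b 1) =ᵐ[Measure.pi σ] W1 v := by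
    rw [Filter.EventuallyEq, ae_iff]
    apply measure_mono_null _ (good_ae hv hF hG hσ0 hσ1)
    intro b hb
    simp only [Set.mem_setOf_eq] at hb
    exact fun hg => hb ((good_utility T v b hg).2)
  rw [expectedUtility, integral_congr_ae hae, pi_path hσ0 hσ1]
  have hi0 : Integrable (W1 v) (((1:ENNReal)/2) • (μF.prod μG).map Phi0) :=
    (integrable_of_bounded (meas_W1 v).aestronglyMeasurable (W1_abs v)).smul_measure (by norm_num)
  have hi1 : Integrable (W1 v) (((1:ENNReal)/2) • (μF.prod μG).map Phi1) :=
    (integrable_of_bounded (meas_W1 v).aestronglyMeasurable (W1_abs v)).smul_measure (by norm_num)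
  rw [integral_add_measure hi0 hi1, integral_smul_measure, integral_smul_measure,
    integral_map meas_Phi0.aemeasurable (meas_W1 v).aestronglyMeasurable,
    integral_map meas_Phi1.aemeasurable (meas_W1 v).aestronglyMeasurable]
  have hint : Integrable (fun p : ℝ × ℝ =>
      if 0 ≤ p.2 ∧ p.2 ≤ 1/2 then (if p.1 ≤ p.2 then v - p.2 else 0) else 0)
      (μF.prod μG) := integrable_of_bounded (meas_w1p v).aestronglyMeasurable (w1p_abs v)
  have e0 : ∫ p, W1 v (Phi0 p) ∂(μF.prod μG) = v - 1/2 := by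
    simp only [W1_Phi0]
    rw [MeasureTheory.integral_prod_symm _ hint]
    simp only [int_w1_inner hv hF]
    exact int_w1_outer hv hG
  have e1 : ∫ p, W1 v (Phi1 p) ∂(μF.prod μG) = v - 1/2 := by
    simp only [W1_Phi1]
    rw [MeasureTheory.integral_prod_symm _ hint]
    simp only [int_w1_inner hv hF]
    exact int_w1_outer hv hG
  rw [e0, e1, half_toReal]
  simp only [smul_eq_mul]
  ring

include hG hσ1 in
lemma EU_dev0_le (T : TieRule (Fin 2) (Fin 2)) (B : Fin 2 → ℝ) (hB : ∀ j, 0 ≤ B j) :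
    expectedUtility (V v) T (Function.update σ 0 (Measure.dirac B)) 0 ≤ 0 := by
  haveI iM0 : IsProbabilityMeasure (μG.map (fun x => (![B, load0 x] : Fin 2 → Fin 2 → ℝ))) :=
    Measure.isProbabilityMeasure_map (meas_psi0 B).aemeasurable
  haveI iM1 : IsProbabilityMeasure (μG.map (fun x => (![B, load1 x] : Fin 2 → Fin 2 → ℝ))) :=
    Measure.isProbabilityMeasure_map (meas_psi1 B).aemeasurable
  rw [expectedUtility, pi_dev0 hσ1 B]
  by_cases hI : Integrable (fun b => utility (V v) T b 0)
      ((1 / 2 : ENNReal) • μG.map (fun x => (![B, load0 x] : Fin 2 → Fin 2 → ℝ)) +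
       (1 / 2 : ENNReal) • μG.map (fun x => (![B, load1 x] : Fin 2 → Fin 2 → ℝ)))
  swap
  · rw [integral_undef hI]
  have hib0 : Integrable (gA B)
      ((1 / 2 : ENNReal) • μG.map (fun x => (![B, load0 x] : Fin 2 → Fin 2 → ℝ))) :=
    (integrable_of_bounded (meas_gA B).aestronglyMeasurable (gA_abs B hB)).smul_measure
      (by norm_num)
  have hib1 : Integrable (gA B)
      ((1 / 2 : ENNReal) • μG.map (fun x => (![B, load1 x] : Fin 2 → Fin 2 → ℝ))) :=
    (integrable_of_bounded (meas_gA B).aestronglyMeasurable (gA_abs B hB)).smul_measure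
      (by norm_num)
  have hnull : ((1 / 2 : ENNReal) • μG.map (fun x => (![B, load0 x] : Fin 2 → Fin 2 → ℝ)) +
       (1 / 2 : ENNReal) • μG.map (fun x => (![B, load1 x] : Fin 2 → Fin 2 → ℝ))) (GA B)ᶜ
       = 0 := by
    rw [Measure.add_apply, Measure.smul_apply, Measure.smul_apply,
      Measure.map_apply (meas_psi0 B) (meas_GA B).compl,
      Measure.map_apply (meas_psi1 B) (meas_GA B).compl]
    have h0 : (fun x : ℝ => (![B, load0 x] : Fin 2 → Fin 2 → ℝ)) ⁻¹' (GA B)ᶜ ⊆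
        Set.Iic 0 ∪ {B 0} := by
      intro x hx
      simp only [Set.mem_preimage, Set.mem_compl_iff] at hx
      by_contra hcon
      simp only [Set.mem_union, Set.mem_Iic, Set.mem_singleton_iff, not_or, not_le] at hcon
      exact hx ⟨rfl, rfl, Or.inl ⟨hcon.1, rfl, hcon.2⟩⟩
    have h1 : (fun x : ℝ => (![B, load1 x] : Fin 2 → Fin 2 → ℝ)) ⁻¹' (GA B)ᶜ ⊆
        Set.Iic 0 ∪ {B 1} := by
      intro x hx
      simp only [Set.mem_preimage, Set.mem_compl_iff] at hx
      by_contra hcon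
      simp only [Set.mem_union, Set.mem_Iic, Set.mem_singleton_iff, not_or, not_le] at hcon
      exact hx ⟨rfl, rfl, Or.inr ⟨rfl, hcon.1, hcon.2⟩⟩
    rw [measure_mono_null h0 (measure_union_null (Giic0 hG) (Gsing hG (B 0))),
      measure_mono_null h1 (measure_union_null (Giic0 hG) (Gsing hG (B 1)))]
    simp
  have hae : (fun b => utility (V v) T b 0) ≤ᵐ[
      (1 / 2 : ENNReal) • μG.map (fun x => (![B, load0 x] : Fin 2 → Fin 2 → ℝ)) +
      (1 / 2 : ENNReal) • μG.map (fun x => (![B, load1 x] : Fin 2 → Fin 2 → ℝ))] gA B := by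
    rw [Filter.EventuallyLE, ae_iff]
    apply measure_mono_null _ hnull
    intro b hb
    simp only [Set.mem_setOf_eq] at hb
    exact fun hg => hb (gA_mem T v B hB b hg)
  refine (integral_mono_ae hI (hib0.add_measure hib1) hae).trans ?_
  rw [integral_add_measure hib0 hib1, integral_smul_measure, integral_smul_measure,
    integral_map (meas_psi0 B).aemeasurable (meas_gA B).aestronglyMeasurable,
    integral_map (meas_psi1 B).aemeasurable (meas_gA B).aestronglyMeasurable]
  have hc0 : ∫ x, gA B (![B, load0 x]) ∂μG ≤ B 0 - B 1 := by
    have hae2 : (fun x => gA B (![B, load0 x])) =ᵐ[μG] fun x => phi x (B 0) (B 1) := by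
      rw [Filter.EventuallyEq, ae_iff]
      apply measure_mono_null _ (Giic0 hG)
      intro x hx
      simp only [Set.mem_setOf_eq] at hx
      by_contra hcon
      simp only [Set.mem_Iic, not_le] at hcon
      apply hx
      have hco : (![B, load0 x] : Fin 2 → Fin 2 → ℝ) 1 0 = x := rfl
      simp only [gA, hco, if_pos hcon]
    rw [integral_congr_ae hae2]
    exact int_phi hG (B 0) (B 1) (hB 0) (hB 1)
  have hc1 : ∫ x, gA B (![B, load1 x]) ∂μG ≤ B 1 - B 0 := by
    have heq : ∀ x : ℝ, gA B (![B, load1 x]) = phi x (B 1) (B 0) := by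
      intro x
      have h0 : (![B, load1 x] : Fin 2 → Fin 2 → ℝ) 1 0 = 0 := rfl
      have h1 : (![B, load1 x] : Fin 2 → Fin 2 → ℝ) 1 1 = x := rfl
      simp only [gA, h0, h1, lt_irrefl, if_false]
    simp only [heq]
    exact int_phi hG (B 1) (B 0) (hB 1) (hB 0)
  rw [half_toReal]
  simp only [smul_eq_mul]
  linarith

include hv hF hσ0 in
lemma EU_dev1_le (T : TieRule (Fin 2) (Fin 2)) (B : Fin 2 → ℝ) (hB : ∀ j, 0 ≤ B j) :
    expectedUtility (V v) T (Function.update σ 1 (Measure.dirac B)) 1 ≤ v - 1/2 := by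
  haveI i0 := sigma0_prob hσ0
  haveI iM : IsProbabilityMeasure (μF.map (fun y => (![cst y, B] : Fin 2 → Fin 2 → ℝ))) :=
    Measure.isProbabilityMeasure_map (meas_psiF B).aemeasurable
  rw [expectedUtility, pi_dev1 hσ0 B]
  by_cases hI : Integrable (fun b => utility (V v) T b 1)
      (μF.map (fun y => (![cst y, B] : Fin 2 → Fin 2 → ℝ)))
  swap
  · rw [integral_undef hI]
    linarith
  have hnull : (μF.map (fun y => (![cst y, B] : Fin 2 → Fin 2 → ℝ))) (GB B)ᶜ = 0 := by
    rw [Measure.map_apply (meas_psiF B) (meas_GB B).compl]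
    have h0 : (fun y : ℝ => (![cst y, B] : Fin 2 → Fin 2 → ℝ)) ⁻¹' (GB B)ᶜ = ∅ := by
      rw [Set.eq_empty_iff_forall_notMem]
      intro y hy
      simp only [Set.mem_preimage, Set.mem_compl_iff] at hy
      exact hy ⟨rfl, rfl, rfl⟩
    rw [h0, measure_empty]
  have hib : Integrable (gB v B) (μF.map (fun y => (![cst y, B] : Fin 2 → Fin 2 → ℝ))) :=
    integrable_of_bounded (meas_gB v B).aestronglyMeasurable (gB_abs v B hB)
  have hae : (fun b => utility (V v) T b 1) ≤ᵐ[
      μF.map (fun y => (![cst y, B] : Fin 2 → Fin 2 → ℝ))] gB v B := by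
    rw [Filter.EventuallyLE, ae_iff]
    apply measure_mono_null _ hnull
    intro b hb
    simp only [Set.mem_setOf_eq] at hb
    exact fun hg => hb (gB_mem T v B hB b hg)
  refine (integral_mono_ae hI hib hae).trans ?_
  rw [integral_map (meas_psiF B).aemeasurable (meas_gB v B).aestronglyMeasurable]
  have heq : ∀ y : ℝ, gB v B (![cst y, B]) =
      (if y ≤ max (B 0) (B 1) then max (v - max (B 0) (B 1)) 0 else 0) := fun _ => rfl
  simp only [heq]
  exact int_devOR hv hF _ (le_trans (hB 0) (le_max_left _ _))

end M3
end
end AndOr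

end AndOrProofs

/-- In the AND-OR game on 2 items with `v > 1/2`, the AND bidder bidding
`(y,y)` with `y` drawn from the CDF `F(y) = (v - 1/2)/(v - y)` on `[0,1/2]` (which has an
atom at `0` of mass `1 - 1/(2v)`), and the OR bidder bidding `x` drawn from the CDF
`G(x) = x/(1-x)` on `[0,1/2]` on one of the two items chosen uniformly at random (and `0`
on the other), form a mixed Nash equilibrium under any tie-breaking rule; the AND bidder's
expected utility is `0` and the OR bidder's is `v - 1/2`. -/
theorem and_or_two_items_mixed_nash (v : ℝ) (hv : 1 / 2 < v)
    (μF μG : Measure ℝ) (hμF : IsProbabilityMeasure μF) (hμG : IsProbabilityMeasure μG)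
    (hF : ∀ y : ℝ, μF (Set.Iic y) =
      if y < 0 then 0 else if y ≤ 1 / 2 then ENNReal.ofReal ((v - 1 / 2) / (v - y)) else 1)
    (hG : ∀ x : ℝ, μG (Set.Iic x) =
      if x < 0 then 0 else if x ≤ 1 / 2 then ENNReal.ofReal (x / (1 - x)) else 1)
    (σ : Fin 2 → Measure (Fin 2 → ℝ))
    (hσ0 : σ 0 = μF.map (fun y => fun _ : Fin 2 => y))
    (hσ1 : σ 1 = (1 / 2 : ENNReal) • μG.map (fun x => ![x, 0]) +
                 (1 / 2 : ENNReal) • μG.map (fun x => ![(0 : ℝ), x]))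
    (T : TieRule (Fin 2) (Fin 2)) :
    μF {0} = ENNReal.ofReal (1 - 1 / (2 * v)) ∧
    MixedNash ![andVal (Fin 2), orVal (Fin 2) v] T σ ∧
    expectedUtility ![andVal (Fin 2), orVal (Fin 2) v] T σ 0 = 0 ∧
    expectedUtility ![andVal (Fin 2), orVal (Fin 2) v] T σ 1 = v - 1 / 2 := by
  haveI := hμF
  haveI := hμG
  have hs0 : σ 0 = μF.map AndOr.cst := hσ0
  have hs1 : σ 1 = (1 / 2 : ENNReal) • μG.map AndOr.load0 +
      (1 / 2 : ENNReal) • μG.map AndOr.load1 := hσ1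
  have hpath0 : expectedUtility ![andVal (Fin 2), orVal (Fin 2) v] T σ 0 = 0 :=
    AndOr.EU_path0 hv hF hG hs0 hs1 T
  have hpath1 : expectedUtility ![andVal (Fin 2), orVal (Fin 2) v] T σ 1 = v - 1 / 2 :=
    AndOr.EU_path1 hv hF hG hs0 hs1 T
  refine ⟨AndOr.Fatom hv hF, ?_, hpath0, hpath1⟩
  intro i b' hb'
  fin_cases i
  · show expectedUtility ![andVal (Fin 2), orVal (Fin 2) v] T
        (Function.update σ 0 (Measure.dirac b')) 0 ≤
      expectedUtility ![andVal (Fin 2), orVal (Fin 2) v] T σ 0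
    rw [hpath0]
    exact AndOr.EU_dev0_le hG hs1 T b' hb'
  · show expectedUtility ![andVal (Fin 2), orVal (Fin 2) v] T
        (Function.update σ 1 (Measure.dirac b')) 1 ≤
      expectedUtility ![andVal (Fin 2), orVal (Fin 2) v] T σ 1
    rw [hpath1]
    exact AndOr.EU_dev1_le hv hF hs0 T b' hb'
end

section
/- Consider the triangle game: three items {0,1,2} and three single-minded bidders, where bidder j (j = 0,1,2) has value 1 for any set containing both items j and j+1 (mod 3) and value 0 for every other set. If each bidder independently draws x uniformly at random from [0,1/2] (cumulative distribution function F(x) = 2x) and bids x on both items of his desired pair and 0 on the third item, then this profile of mixed strategies is a mixed Nash equilibrium under any tie-breaking rule, and each bidder's expected utility is 0. -/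
open MeasureTheory Finset

namespace Triangle

section A3


noncomputable def Hfun (p q r : ℝ) : ℝ × ℝ → ℝ := fun yz =>
  (if yz.1 < p ∧ yz.2 < q then (1:ℝ) else 0) - p * (if yz.1 < p then (1:ℝ) else 0)
    - q * (if yz.2 < q then (1:ℝ) else 0) - r * (if yz.1 < r ∧ yz.2 < r then (1:ℝ) else 0)

noncomputable def Fr (μ : Measure ℝ) (t : ℝ) : ℝ := (μ (Set.Iio t)).toReal

variable {μ : Measure ℝ} [IsProbabilityMeasure μ]

lemma meas_ind (p : ℝ) : Measurable (fun y : ℝ => if y < p then (1:ℝ) else 0) :=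
  Measurable.ite measurableSet_Iio measurable_const measurable_const

lemma int_ind (c p : ℝ) :
    Integrable (fun y : ℝ => c * (if y < p then (1:ℝ) else 0)) μ := by
  refine (integrable_const |c|).mono' ((measurable_const.mul (meas_ind p)).aestronglyMeasurable)
    (Filter.Eventually.of_forall fun y => ?_)
  rw [Real.norm_eq_abs, abs_mul]
  rcases lt_or_ge y p with h | h
  · rw [if_pos h]; simp
  · rw [if_neg (not_lt.2 h)]; simp [abs_nonneg]

lemma int_ind0 (p : ℝ) : Integrable (fun y : ℝ => if y < p then (1:ℝ) else 0) μ := by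
  have h := int_ind (μ := μ) 1 p
  simpa using h

lemma integral_ind (c p : ℝ) :
    ∫ y, c * (if y < p then (1:ℝ) else 0) ∂μ = c * Fr μ p := by
  rw [integral_const_mul]
  congr 1
  have h : (fun y : ℝ => if y < p then (1:ℝ) else 0)
      = fun y => Set.indicator (Set.Iio p) (fun _ => (1:ℝ)) y := by
    funext y
    rw [Set.indicator_apply]
    simp [Set.mem_Iio]
  rw [h, integral_indicator_const (1:ℝ) measurableSet_Iio, smul_eq_mul, mul_one, Fr, Measure.real]

lemma integral_ind0 (p : ℝ) : ∫ y, (if y < p then (1:ℝ) else 0) ∂μ = Fr μ p := by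
  have h := integral_ind (μ := μ) 1 p
  simpa using h

lemma ite_and_mul (a b : Prop) [Decidable a] [Decidable b] :
    (if a ∧ b then (1:ℝ) else 0) = (if a then (1:ℝ) else 0) * (if b then (1:ℝ) else 0) := by
  by_cases ha : a <;> by_cases hb : b <;> simp [ha, hb]

lemma Hfun_meas (p q r : ℝ) : Measurable (Hfun p q r) := by
  unfold Hfun
  apply Measurable.sub
  apply Measurable.sub
  apply Measurable.sub
  · exact Measurable.ite ((measurableSet_lt measurable_fst measurable_const).inter
      (measurableSet_lt measurable_snd measurable_const)) measurable_const measurable_const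
  · exact measurable_const.mul ((meas_ind p).comp measurable_fst)
  · exact measurable_const.mul ((meas_ind q).comp measurable_snd)
  · exact measurable_const.mul (Measurable.ite ((measurableSet_lt measurable_fst
      measurable_const).inter (measurableSet_lt measurable_snd measurable_const))
      measurable_const measurable_const)

lemma integral_Hfun (p q r : ℝ) :
    ∫ yz, Hfun p q r yz ∂(μ.prod μ)
      = Fr μ p * Fr μ q - p * Fr μ p - q * Fr μ q - r * (Fr μ r * Fr μ r) := by
  have IA : Integrable (fun yz : ℝ × ℝ =>
      (if yz.1 < p then (1:ℝ) else 0) * (if yz.2 < q then (1:ℝ) else 0)) (μ.prod μ) :=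
    (int_ind0 p).mul_prod (int_ind0 q)
  have IB : Integrable (fun yz : ℝ × ℝ =>
      (p * if yz.1 < p then (1:ℝ) else 0) * (1:ℝ)) (μ.prod μ) :=
    (int_ind p p).mul_prod (integrable_const (1:ℝ))
  have IC : Integrable (fun yz : ℝ × ℝ =>
      (1:ℝ) * (q * if yz.2 < q then (1:ℝ) else 0)) (μ.prod μ) :=
    (integrable_const (1:ℝ)).mul_prod (int_ind q q)
  have ID : Integrable (fun yz : ℝ × ℝ =>
      (r * if yz.1 < r then (1:ℝ) else 0) * (if yz.2 < r then (1:ℝ) else 0)) (μ.prod μ) :=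
    (int_ind r r).mul_prod (int_ind0 r)
  have IAB : Integrable (fun yz : ℝ × ℝ =>
      (if yz.1 < p then (1:ℝ) else 0) * (if yz.2 < q then (1:ℝ) else 0)
        - (p * if yz.1 < p then (1:ℝ) else 0) * (1:ℝ)) (μ.prod μ) := IA.sub IB
  have IABC : Integrable (fun yz : ℝ × ℝ =>
      ((if yz.1 < p then (1:ℝ) else 0) * (if yz.2 < q then (1:ℝ) else 0)
        - (p * if yz.1 < p then (1:ℝ) else 0) * (1:ℝ))
        - (1:ℝ) * (q * if yz.2 < q then (1:ℝ) else 0)) (μ.prod μ) := IAB.sub IC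
  have hfun : ∀ yz : ℝ × ℝ, Hfun p q r yz =
      (((if yz.1 < p then (1:ℝ) else 0) * (if yz.2 < q then (1:ℝ) else 0)
        - (p * if yz.1 < p then (1:ℝ) else 0) * (1:ℝ))
        - (1:ℝ) * (q * if yz.2 < q then (1:ℝ) else 0))
        - ((r * if yz.1 < r then (1:ℝ) else 0) * (if yz.2 < r then (1:ℝ) else 0)) := by
    intro yz; simp only [Hfun, ite_and_mul]; ring
  calc ∫ yz, Hfun p q r yz ∂(μ.prod μ)
      = ∫ yz : ℝ × ℝ, ((((if yz.1 < p then (1:ℝ) else 0) * (if yz.2 < q then (1:ℝ) else 0)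
        - (p * if yz.1 < p then (1:ℝ) else 0) * (1:ℝ))
        - (1:ℝ) * (q * if yz.2 < q then (1:ℝ) else 0))
        - ((r * if yz.1 < r then (1:ℝ) else 0) * (if yz.2 < r then (1:ℝ) else 0))) ∂(μ.prod μ) :=
      integral_congr_ae (Filter.Eventually.of_forall hfun)
    _ = Fr μ p * Fr μ q - p * Fr μ p - q * Fr μ q - r * (Fr μ r * Fr μ r) := by
      rw [integral_sub IABC ID, integral_sub IAB IC, integral_sub IA IB,
        integral_prod_mul (fun y : ℝ => if y < p then (1:ℝ) else 0)
          (fun w : ℝ => if w < q then (1:ℝ) else 0),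
        integral_prod_mul (fun y : ℝ => p * if y < p then (1:ℝ) else 0) (fun _ : ℝ => (1:ℝ)),
        integral_prod_mul (fun _ : ℝ => (1:ℝ)) (fun w : ℝ => q * if w < q then (1:ℝ) else 0),
        integral_prod_mul (fun y : ℝ => r * if y < r then (1:ℝ) else 0)
          (fun w : ℝ => if w < r then (1:ℝ) else 0),
        integral_ind0, integral_ind0, integral_ind0, integral_ind, integral_ind, integral_ind]
      simp only [integral_const, measure_univ, ENNReal.toReal_one, probReal_univ, smul_eq_mul, one_mul, mul_one]
      ring

lemma integral_Hfun_snd (p q r : ℝ) :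
    ∫ x : ℝ × (ℝ × ℝ), Hfun p q r x.2 ∂(μ.prod (μ.prod μ))
      = Fr μ p * Fr μ q - p * Fr μ p - q * Fr μ q - r * (Fr μ r * Fr μ r) := by
  have h : ∀ x : ℝ × (ℝ × ℝ), Hfun p q r x.2 = (1:ℝ) * Hfun p q r x.2 :=
    fun x => (one_mul _).symm
  calc ∫ x : ℝ × (ℝ × ℝ), Hfun p q r x.2 ∂(μ.prod (μ.prod μ))
      = ∫ x : ℝ × (ℝ × ℝ), (1:ℝ) * Hfun p q r x.2 ∂(μ.prod (μ.prod μ)) :=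
      integral_congr_ae (Filter.Eventually.of_forall h)
    _ = (∫ _ : ℝ, (1:ℝ) ∂μ) * ∫ w, Hfun p q r w ∂(μ.prod μ) :=
      integral_prod_mul (fun _ : ℝ => (1:ℝ)) (Hfun p q r)
    _ = Fr μ p * Fr μ q - p * Fr μ p - q * Fr μ q - r * (Fr μ r * Fr μ r) := by
      rw [integral_Hfun]
      simp [measure_univ]

lemma meas_G : Measurable (fun x : ℝ × (ℝ × ℝ) => Hfun x.1 x.1 0 x.2) := by
  unfold Hfun
  have m1 : Measurable fun x : ℝ × (ℝ × ℝ) => x.2.1 := measurable_fst.comp measurable_snd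
  have m2 : Measurable fun x : ℝ × (ℝ × ℝ) => x.2.2 := measurable_snd.comp measurable_snd
  apply Measurable.sub
  apply Measurable.sub
  apply Measurable.sub
  · exact Measurable.ite ((measurableSet_lt m1 measurable_fst).inter
      (measurableSet_lt m2 measurable_fst)) measurable_const measurable_const
  · exact measurable_fst.mul (Measurable.ite (measurableSet_lt m1 measurable_fst)
      measurable_const measurable_const)
  · exact measurable_fst.mul (Measurable.ite (measurableSet_lt m2 measurable_fst)
      measurable_const measurable_const)
  · exact measurable_const.mul (Measurable.ite ((measurableSet_lt m1 measurable_const).inter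
      (measurableSet_lt m2 measurable_const)) measurable_const measurable_const)

lemma ae_fst_Ioc (hA : μ (Set.Ioc (0:ℝ) (1/2))ᶜ = 0) :
    ∀ᵐ x ∂(μ.prod (μ.prod μ)), x.1 ∈ Set.Ioc (0:ℝ) (1/2) := by
  rw [ae_iff]
  have h : {x : ℝ × (ℝ × ℝ) | ¬ x.1 ∈ Set.Ioc (0:ℝ) (1/2)}
      = (Set.Ioc (0:ℝ) (1/2))ᶜ ×ˢ (Set.univ : Set (ℝ × ℝ)) := by
    ext x; simp [Set.mem_prod]
  rw [h, Measure.prod_prod, hA, zero_mul]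

lemma integral_G (hA : μ (Set.Ioc (0:ℝ) (1/2))ᶜ = 0)
    (hFr : ∀ t : ℝ, 0 < t → t ≤ 1/2 → Fr μ t = 2*t) :
    ∫ x : ℝ × (ℝ × ℝ), Hfun x.1 x.1 0 x.2 ∂(μ.prod (μ.prod μ)) = 0 := by
  have hint : Integrable (fun x : ℝ × (ℝ × ℝ) => Hfun x.1 x.1 0 x.2) (μ.prod (μ.prod μ)) := by
    refine (integrable_const (2:ℝ)).mono' meas_G.aestronglyMeasurable ?_
    filter_upwards [ae_fst_Ioc hA] with x hx
    obtain ⟨h0, h1⟩ := hx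
    rw [Real.norm_eq_abs]
    by_cases c1 : x.2.1 < x.1 ∧ x.2.2 < x.1 <;> by_cases c2 : x.2.1 < x.1 <;>
      by_cases c3 : x.2.2 < x.1 <;>
      simp only [Hfun, c1, c2, c3, and_self, and_true, true_and, and_false, false_and,
        if_true, if_false, mul_one, mul_zero, zero_mul, sub_zero] <;>
      rw [abs_le] <;> constructor <;> nlinarith
  rw [MeasureTheory.integral_prod _ hint]
  have hae : ∀ᵐ a ∂μ, a ∈ Set.Ioc (0:ℝ) (1/2) := by
    rw [ae_iff]
    exact hA
  apply integral_eq_zero_of_ae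
  filter_upwards [hae] with a ha
  simp only [Pi.zero_apply]
  rw [integral_Hfun, hFr a ha.1 ha.2]
  ring

end A3

section A1


noncomputable def gfun (k : Fin 3) (x : ℝ) : Fin 3 → ℝ :=
  fun j => if j ∈ ({k, k+1} : Finset (Fin 3)) then x else 0

lemma gfun_meas (k : Fin 3) : Measurable (gfun k) := by
  apply measurable_pi_lambda
  intro j
  by_cases h : j ∈ ({k, k+1} : Finset (Fin 3)) <;> simp only [gfun, h, if_pos, if_neg,
    not_false_iff]
  · exact measurable_id
  · exact measurable_const


lemma sum3 (i : Fin 3) (φ : Fin 3 → ℝ) : ∑ j, φ j = φ i + φ (i+1) + φ (i+2) := by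
  fin_cases i <;> simp [Fin.sum_univ_three] <;> ring

lemma winner (T : TieRule (Fin 3) (Fin 3)) (b : Fin 3 → Fin 3 → ℝ) (i j : Fin 3)
    (h : ∀ k, k ≠ i → b k j < b i j) : j ∈ T.alloc b i := by
  obtain ⟨i₀, hi₀, -⟩ := T.partition b j
  by_cases hk : i₀ = i
  · exact hk ▸ hi₀
  · exact absurd (T.highest b i₀ j hi₀ i) (not_le.2 (h i₀ hk))

lemma loser (T : TieRule (Fin 3) (Fin 3)) (b : Fin 3 → Fin 3 → ℝ) (i j k : Fin 3)
    (h : b i j < b k j) : j ∉ T.alloc b i := fun hmem =>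
  absurd (T.highest b i j hmem k) (not_le.2 h)

lemma utility_formula (T : TieRule (Fin 3) (Fin 3)) (i : Fin 3)
    (b : Fin 3 → Fin 3 → ℝ) (c : Fin 3 → ℝ) (y z : ℝ)
    (hbi : b i = c) (hb1 : b (i+1) = gfun (i+1) z) (hb2 : b (i+2) = gfun (i+2) y)
    (hy : 0 < y) (hz : 0 < z)
    (t1 : c i ≠ y) (t2 : c (i+1) ≠ z) (t3 : c (i+2) ≠ y) (t4 : c (i+2) ≠ z) :
    utility (fun k : Fin 3 => singleMinded ({k, k + 1} : Finset (Fin 3)) 1) T b i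
      = Hfun (c i) (c (i+1)) (c (i+2)) (y, z) := by
  have d10 : ∀ i k : Fin 3, k = i ∨ k = i + 1 ∨ k = i + 2 := by decide
  have dA : ∀ i : Fin 3, i ∉ ({i+1, i+1+1} : Finset (Fin 3)) := by decide
  have dB : ∀ i : Fin 3, i+1 ∈ ({i+1, i+1+1} : Finset (Fin 3)) := by decide
  have dC : ∀ i : Fin 3, i+2 ∈ ({i+1, i+1+1} : Finset (Fin 3)) := by decide
  have dD : ∀ i : Fin 3, i ∈ ({i+2, i+2+1} : Finset (Fin 3)) := by decide
  have dE : ∀ i : Fin 3, i+1 ∉ ({i+2, i+2+1} : Finset (Fin 3)) := by decide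
  have dF : ∀ i : Fin 3, i+2 ∈ ({i+2, i+2+1} : Finset (Fin 3)) := by decide
  -- all the bids
  have e1i : b (i+1) i = 0 := by
    rw [hb1]; simp only [gfun]; exact if_neg (dA i)
  have e1s : b (i+1) (i+1) = z := by
    rw [hb1]; simp only [gfun]; exact if_pos (dB i)
  have e1t : b (i+1) (i+2) = z := by
    rw [hb1]; simp only [gfun]; exact if_pos (dC i)
  have e2i : b (i+2) i = y := by
    rw [hb2]; simp only [gfun]; exact if_pos (dD i)
  have e2s : b (i+2) (i+1) = 0 := by
    rw [hb2]; simp only [gfun]; exact if_neg (dE i)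
  have e2t : b (i+2) (i+2) = y := by
    rw [hb2]; simp only [gfun]; exact if_pos (dF i)
  have mem1 : i ∈ T.alloc b i ↔ y < c i := by
    constructor
    · intro h
      have := T.highest b i i h (i+2)
      rw [e2i, hbi] at this
      exact lt_of_le_of_ne this (Ne.symm t1)
    · intro hlt
      apply winner
      intro k hk
      rcases d10 i k with h | h | h
      · exact absurd h hk
      · subst h; rw [e1i, hbi]; linarith
      · subst h; rw [e2i, hbi]; linarith
  have mem2 : (i+1) ∈ T.alloc b i ↔ z < c (i+1) := by
    constructor
    · intro h
      have := T.highest b i (i+1) h (i+1)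
      rw [e1s, hbi] at this
      exact lt_of_le_of_ne this (Ne.symm t2)
    · intro hlt
      apply winner
      intro k hk
      rcases d10 i k with h | h | h
      · exact absurd h hk
      · subst h; rw [e1s, hbi]; exact hlt
      · subst h; rw [e2s, hbi]; linarith
  have mem3 : (i+2) ∈ T.alloc b i ↔ (y < c (i+2) ∧ z < c (i+2)) := by
    constructor
    · intro h
      have h1 := T.highest b i (i+2) h (i+2)
      have h2 := T.highest b i (i+2) h (i+1)
      rw [e2t, hbi] at h1
      rw [e1t, hbi] at h2
      exact ⟨lt_of_le_of_ne h1 (Ne.symm t3), lt_of_le_of_ne h2 (Ne.symm t4)⟩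
    · rintro ⟨hlt1, hlt2⟩
      apply winner
      intro k hk
      rcases d10 i k with h | h | h
      · exact absurd h hk
      · subst h; rw [e1t, hbi]; exact hlt2
      · subst h; rw [e2t, hbi]; exact hlt1
  have hval : singleMinded ({i, i + 1} : Finset (Fin 3)) 1 (T.alloc b i)
      = if (i ∈ T.alloc b i ∧ (i+1) ∈ T.alloc b i) then (1:ℝ) else 0 := by
    unfold singleMinded
    congr 1
    simp [Finset.insert_subset_iff, Finset.singleton_subset_iff]
  have hpay : ∑ j ∈ T.alloc b i, b i j
      = (if i ∈ T.alloc b i then c i else 0) + (if (i+1) ∈ T.alloc b i then c (i+1) else 0)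
        + (if (i+2) ∈ T.alloc b i then c (i+2) else 0) := by
    rw [hbi]
    have : ∑ j ∈ T.alloc b i, c j = ∑ j : Fin 3, if j ∈ T.alloc b i then c j else 0 := by
      rw [Finset.sum_ite_mem, Finset.univ_inter]
    rw [this, sum3 i (fun j => if j ∈ T.alloc b i then c j else 0)]
  show singleMinded ({i, i + 1} : Finset (Fin 3)) 1 (T.alloc b i) - ∑ j ∈ T.alloc b i, b i j
      = Hfun (c i) (c (i+1)) (c (i+2)) (y, z)
  rw [hval, hpay]
  simp only [mem1, mem2, mem3, Hfun]
  by_cases hp : y < c i <;> by_cases hq : z < c (i+1) <;>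
    by_cases hr : y < c (i+2) ∧ z < c (i+2)  <;>
    simp [hp, hq, hr] <;> ring

end A1

section A2


variable {μ : Measure ℝ}

lemma mu_eq (hμ : IsProbabilityMeasure μ)
    (hcdf : ∀ x : ℝ, μ (Set.Iic x) =
      if x < 0 then 0 else if x ≤ 1 / 2 then ENNReal.ofReal (2 * x) else 1) :
    μ = ENNReal.ofReal 2 • volume.restrict (Set.Ioc (0:ℝ) (1/2)) := by
  refine Measure.ext_of_Iic μ _ (fun a => ?_)
  rw [hcdf a, Measure.smul_apply, Measure.restrict_apply measurableSet_Iic, smul_eq_mul]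
  rcases lt_or_ge a 0 with h | h
  · rw [if_pos h]
    have : Set.Iic a ∩ Set.Ioc (0:ℝ) (1/2) = ∅ := by
      apply Set.eq_empty_iff_forall_notMem.2
      rintro x ⟨h1, h2, h3⟩
      simp only [Set.mem_Iic] at h1
      linarith
    rw [this]; simp
  · rw [if_neg (not_lt.2 h)]
    rcases le_or_gt a (1/2) with h2 | h2
    · rw [if_pos h2]
      have : Set.Iic a ∩ Set.Ioc (0:ℝ) (1/2) = Set.Ioc 0 a := by
        ext x; simp only [Set.mem_inter_iff, Set.mem_Iic, Set.mem_Ioc]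
        constructor
        · rintro ⟨hx, h0, _⟩; exact ⟨h0, hx⟩
        · rintro ⟨h0, hx⟩; exact ⟨hx, h0, le_trans hx h2⟩
      rw [this, Real.volume_Ioc, ← ENNReal.ofReal_mul (by norm_num : (0:ℝ) ≤ 2)]
      ring_nf
    · rw [if_neg (not_le.2 h2)]
      have : Set.Iic a ∩ Set.Ioc (0:ℝ) (1/2) = Set.Ioc 0 (1/2) := by
        rw [Set.inter_eq_right]
        intro x hx; exact le_trans hx.2 (le_of_lt h2)
      rw [this, Real.volume_Ioc, ← ENNReal.ofReal_mul (by norm_num : (0:ℝ) ≤ 2)]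
      norm_num

variable (hμν : μ = ENNReal.ofReal 2 • volume.restrict (Set.Ioc (0:ℝ) (1/2)))
include hμν

lemma mu_singleton (a : ℝ) : μ {a} = 0 := by
  rw [hμν, Measure.smul_apply, Measure.restrict_apply (measurableSet_singleton a), smul_eq_mul]
  have : volume ({a} ∩ Set.Ioc (0:ℝ) (1/2)) = 0 :=
    measure_mono_null Set.inter_subset_left Real.volume_singleton
  rw [this, mul_zero]

lemma mu_Iio (t : ℝ) :
    μ (Set.Iio t) = if t ≤ 0 then 0 else if t ≤ 1/2 then ENNReal.ofReal (2 * t) else 1 := by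
  rw [hμν, Measure.smul_apply, Measure.restrict_apply measurableSet_Iio, smul_eq_mul]
  rcases le_or_gt t 0 with h | h
  · rw [if_pos h]
    have : Set.Iio t ∩ Set.Ioc (0:ℝ) (1/2) = ∅ := by
      apply Set.eq_empty_iff_forall_notMem.2
      rintro x ⟨h1, h2, h3⟩
      simp only [Set.mem_Iio] at h1
      linarith
    rw [this]; simp
  · rw [if_neg (not_le.2 h)]
    rcases le_or_gt t (1/2) with h2 | h2
    · rw [if_pos h2]
      have : Set.Iio t ∩ Set.Ioc (0:ℝ) (1/2) = Set.Ioo 0 t := by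
        ext x; simp only [Set.mem_inter_iff, Set.mem_Iio, Set.mem_Ioc, Set.mem_Ioo]
        constructor
        · rintro ⟨hx, h0, _⟩; exact ⟨h0, hx⟩
        · rintro ⟨h0, hx⟩; exact ⟨hx, h0, le_trans (le_of_lt hx) h2⟩
      rw [this, Real.volume_Ioo, ← ENNReal.ofReal_mul (by norm_num : (0:ℝ) ≤ 2)]
      ring_nf
    · rw [if_neg (not_le.2 h2)]
      have : Set.Iio t ∩ Set.Ioc (0:ℝ) (1/2) = Set.Ioc 0 (1/2) := by
        rw [Set.inter_eq_right]
        intro x hx; exact lt_of_le_of_lt hx.2 h2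
      rw [this, Real.volume_Ioc, ← ENNReal.ofReal_mul (by norm_num : (0:ℝ) ≤ 2)]
      norm_num

lemma mu_compl_Ioc : μ (Set.Ioc (0:ℝ) (1/2))ᶜ = 0 := by
  rw [hμν, Measure.smul_apply,
    Measure.restrict_apply measurableSet_Ioc.compl, smul_eq_mul]
  rw [Set.compl_inter_self, measure_empty, mul_zero]


omit hμν in
lemma Fr_nonneg (t : ℝ) : 0 ≤ Fr μ t := ENNReal.toReal_nonneg

lemma Fr_eq (t : ℝ) (ht : 0 ≤ t) : Fr μ t = if t ≤ 1/2 then 2*t else 1 := by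
  rw [Fr, mu_Iio hμν]
  rcases le_or_gt t 0 with h | h
  · have : t = 0 := le_antisymm h ht
    subst this
    norm_num
  · rw [if_neg (not_le.2 h)]
    rcases le_or_gt t (1/2) with h2 | h2
    · rw [if_pos h2, if_pos h2, ENNReal.toReal_ofReal (by linarith)]
    · rw [if_neg (not_le.2 h2), if_neg (not_le.2 h2)]; simp

end A2

section A4


variable {μ : Measure ℝ} [IsProbabilityMeasure μ]

lemma mp_reindex (μ : Measure ℝ) [SigmaFinite μ] (e : Fin 3 ≃ Fin 3) :
    MeasurePreserving (fun x : Fin 3 → ℝ => fun j => x (e j))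
      (Measure.pi fun _ => μ) (Measure.pi fun _ => μ) := by
  have h := measurePreserving_piCongrLeft (μ := fun _ : Fin 3 => μ) (f := e.symm)
  have hco : (⇑(MeasurableEquiv.piCongrLeft (fun _ : Fin 3 => ℝ) e.symm))
      = fun x : Fin 3 → ℝ => fun j => x (e j) := by
    funext x j
    have h2 := MeasurableEquiv.piCongrLeft_apply_apply (β := fun _ : Fin 3 => ℝ) e.symm x (e j)
    rwa [Equiv.symm_apply_apply] at h2
  rw [← hco]
  exact h

lemma mp_triple (μ : Measure ℝ) [SigmaFinite μ] :
    MeasurePreserving (fun y : Fin 3 → ℝ => (y 0, (y 1, y 2)))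
      (Measure.pi fun _ => μ) (μ.prod (μ.prod μ)) := by
  have h1 := measurePreserving_piFinSuccAbove (fun _ : Fin 3 => μ) 0
  have h2 := measurePreserving_finTwoArrow μ
  have h3 : MeasurePreserving (Prod.map (id : ℝ → ℝ) MeasurableEquiv.finTwoArrow)
      (μ.prod (Measure.pi fun _ : Fin 2 => μ)) (μ.prod (μ.prod μ)) :=
    (MeasurePreserving.id μ).prod h2
  have h4 := h3.comp h1
  have hco : (Prod.map (id : ℝ → ℝ) MeasurableEquiv.finTwoArrow)
      ∘ (MeasurableEquiv.piFinSuccAbove (fun _ : Fin 3 => ℝ) 0)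
      = fun y : Fin 3 → ℝ => (y 0, (y 1, y 2)) := by
    funext y
    simp only [Function.comp_apply, MeasurableEquiv.piFinSuccAbove_apply, Prod.map,
      MeasurableEquiv.finTwoArrow_apply, id_eq]
    refine Prod.ext rfl (Prod.ext ?_ ?_) <;>
      simp only [Fin.removeNth, Fin.zero_succAbove, Fin.tail] <;> congr 1 <;> decide
  rw [← hco]
  exact h4

lemma mp_Q (μ : Measure ℝ) [SigmaFinite μ] (e : Fin 3 ≃ Fin 3) :
    MeasurePreserving (fun x : Fin 3 → ℝ => (x (e 0), (x (e 1), x (e 2))))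
      (Measure.pi fun _ => μ) (μ.prod (μ.prod μ)) := by
  have h := (mp_triple μ).comp (mp_reindex μ e)
  exact h

-- null sets in the triple product
lemma null_fst_le (h0 : μ (Set.Iic 0) = 0) :
    (μ.prod (μ.prod μ)) {p : ℝ × (ℝ × ℝ) | p.1 ≤ 0} = 0 := by
  have h : {p : ℝ × (ℝ × ℝ) | p.1 ≤ 0} = Set.Iic (0:ℝ) ×ˢ (Set.univ : Set (ℝ × ℝ)) := by
    ext p; simp [Set.mem_prod]
  rw [h, Measure.prod_prod, h0, zero_mul]

lemma null_snd1_le (h0 : μ (Set.Iic 0) = 0) :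
    (μ.prod (μ.prod μ)) {p : ℝ × (ℝ × ℝ) | p.2.1 ≤ 0} = 0 := by
  have h : {p : ℝ × (ℝ × ℝ) | p.2.1 ≤ 0}
      = (Set.univ : Set ℝ) ×ˢ (Set.Iic (0:ℝ) ×ˢ (Set.univ : Set ℝ)) := by
    ext p; simp [Set.mem_prod]
  rw [h, Measure.prod_prod, Measure.prod_prod, h0, zero_mul, mul_zero]

lemma null_snd2_le (h0 : μ (Set.Iic 0) = 0) :
    (μ.prod (μ.prod μ)) {p : ℝ × (ℝ × ℝ) | p.2.2 ≤ 0} = 0 := by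
  have h : {p : ℝ × (ℝ × ℝ) | p.2.2 ≤ 0}
      = (Set.univ : Set ℝ) ×ˢ ((Set.univ : Set ℝ) ×ˢ Set.Iic (0:ℝ)) := by
    ext p; simp [Set.mem_prod]
  rw [h, Measure.prod_prod, Measure.prod_prod, h0, mul_zero, mul_zero]

lemma null_snd1_eq (hs : ∀ a : ℝ, μ {a} = 0) (c : ℝ) :
    (μ.prod (μ.prod μ)) {p : ℝ × (ℝ × ℝ) | p.2.1 = c} = 0 := by
  have h : {p : ℝ × (ℝ × ℝ) | p.2.1 = c}
      = (Set.univ : Set ℝ) ×ˢ (({c} : Set ℝ) ×ˢ (Set.univ : Set ℝ)) := by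
    ext p
    simp only [Set.mem_setOf_eq, Set.mem_prod, Set.mem_univ, true_and, and_true,
      Set.mem_singleton_iff]
  rw [h, Measure.prod_prod, Measure.prod_prod, hs c, zero_mul, mul_zero]

lemma null_snd2_eq (hs : ∀ a : ℝ, μ {a} = 0) (c : ℝ) :
    (μ.prod (μ.prod μ)) {p : ℝ × (ℝ × ℝ) | p.2.2 = c} = 0 := by
  have h : {p : ℝ × (ℝ × ℝ) | p.2.2 = c}
      = (Set.univ : Set ℝ) ×ˢ ((Set.univ : Set ℝ) ×ˢ ({c} : Set ℝ)) := by
    ext p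
    simp only [Set.mem_setOf_eq, Set.mem_prod, Set.mem_univ, true_and, and_true,
      Set.mem_singleton_iff]
  rw [h, Measure.prod_prod, Measure.prod_prod, hs c, mul_zero, mul_zero]

lemma null_diag1 (hs : ∀ a : ℝ, μ {a} = 0) :
    (μ.prod (μ.prod μ)) {p : ℝ × (ℝ × ℝ) | p.1 = p.2.1} = 0 := by
  have hm : MeasurableSet {p : ℝ × (ℝ × ℝ) | p.1 = p.2.1} :=
    measurableSet_eq_fun measurable_fst (measurable_fst.comp measurable_snd)
  rw [Measure.prod_apply hm]
  have h : ∀ a : ℝ, (μ.prod μ) (Prod.mk a ⁻¹' {p : ℝ × (ℝ × ℝ) | p.1 = p.2.1}) = 0 := by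
    intro a
    have he : (Prod.mk a ⁻¹' {p : ℝ × (ℝ × ℝ) | p.1 = p.2.1})
        = ({a} : Set ℝ) ×ˢ (Set.univ : Set ℝ) := by
      ext q
      simp only [Set.mem_preimage, Set.mem_setOf_eq, Set.mem_prod, Set.mem_univ, true_and,
        and_true, Set.mem_singleton_iff, eq_comm]
    rw [he, Measure.prod_prod, hs a, zero_mul]
  simp only [h]
  simp

lemma null_diag2 (hs : ∀ a : ℝ, μ {a} = 0) :
    (μ.prod (μ.prod μ)) {p : ℝ × (ℝ × ℝ) | p.1 = p.2.2} = 0 := by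
  have hm : MeasurableSet {p : ℝ × (ℝ × ℝ) | p.1 = p.2.2} :=
    measurableSet_eq_fun measurable_fst (measurable_snd.comp measurable_snd)
  rw [Measure.prod_apply hm]
  have h : ∀ a : ℝ, (μ.prod μ) (Prod.mk a ⁻¹' {p : ℝ × (ℝ × ℝ) | p.1 = p.2.2}) = 0 := by
    intro a
    have he : (Prod.mk a ⁻¹' {p : ℝ × (ℝ × ℝ) | p.1 = p.2.2})
        = (Set.univ : Set ℝ) ×ˢ ({a} : Set ℝ) := by
      ext q
      simp only [Set.mem_preimage, Set.mem_setOf_eq, Set.mem_prod, Set.mem_univ, true_and,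
        and_true, Set.mem_singleton_iff, eq_comm]
    rw [he, Measure.prod_prod, hs a, mul_zero]
  simp only [h]
  simp

lemma final_ineq (b1 b2 b3 F1 F2 F3 : ℝ) (hb1 : 0 ≤ b1) (hb2 : 0 ≤ b2) (hb3 : 0 ≤ b3)
    (hF1 : F1 = if b1 ≤ 1/2 then 2*b1 else 1) (hF2 : F2 = if b2 ≤ 1/2 then 2*b2 else 1)
    (hF3 : 0 ≤ F3) :
    F1 * F2 - b1 * F1 - b2 * F2 - b3 * (F3 * F3) ≤ 0 := by
  have h3 : 0 ≤ b3 * (F3 * F3) := by positivity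
  rcases le_or_gt b1 (1/2) with h1 | h1 <;> rcases le_or_gt b2 (1/2) with h2 | h2
  · rw [if_pos h1] at hF1; rw [if_pos h2] at hF2; subst hF1; subst hF2
    nlinarith [sq_nonneg (b1 - b2)]
  · rw [if_pos h1] at hF1; rw [if_neg (not_le.2 h2)] at hF2; subst hF1; subst hF2
    nlinarith [sq_nonneg (b1 - 1/2)]
  · rw [if_neg (not_le.2 h1)] at hF1; rw [if_pos h2] at hF2; subst hF1; subst hF2
    nlinarith [sq_nonneg (b2 - 1/2)]
  · rw [if_neg (not_le.2 h1)] at hF1; rw [if_neg (not_le.2 h2)] at hF2; subst hF1; subst hF2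
    linarith

end A4

section GEN
-- === 2-d null lemmas + generic lemma + main theorem (to be placed in namespace Triangle) ===

variable {μ : Measure ℝ} [IsProbabilityMeasure μ]

lemma null2_fst_le (h0 : μ (Set.Iic 0) = 0) :
    (μ.prod μ) {q : ℝ × ℝ | q.1 ≤ 0} = 0 := by
  have h : {q : ℝ × ℝ | q.1 ≤ 0} = Set.Iic (0:ℝ) ×ˢ (Set.univ : Set ℝ) := by
    ext q
    simp only [Set.mem_setOf_eq, Set.mem_prod, Set.mem_univ, and_true, Set.mem_Iic]
  rw [h, Measure.prod_prod, h0, zero_mul]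

lemma null2_snd_le (h0 : μ (Set.Iic 0) = 0) :
    (μ.prod μ) {q : ℝ × ℝ | q.2 ≤ 0} = 0 := by
  have h : {q : ℝ × ℝ | q.2 ≤ 0} = (Set.univ : Set ℝ) ×ˢ Set.Iic (0:ℝ) := by
    ext q
    simp only [Set.mem_setOf_eq, Set.mem_prod, Set.mem_univ, true_and, Set.mem_Iic]
  rw [h, Measure.prod_prod, h0, mul_zero]

lemma null2_fst_eq (hs : ∀ a : ℝ, μ {a} = 0) (c : ℝ) :
    (μ.prod μ) {q : ℝ × ℝ | q.1 = c} = 0 := by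
  have h : {q : ℝ × ℝ | q.1 = c} = ({c} : Set ℝ) ×ˢ (Set.univ : Set ℝ) := by
    ext q
    simp only [Set.mem_setOf_eq, Set.mem_prod, Set.mem_univ, and_true, Set.mem_singleton_iff]
  rw [h, Measure.prod_prod, hs c, zero_mul]

lemma null2_snd_eq (hs : ∀ a : ℝ, μ {a} = 0) (c : ℝ) :
    (μ.prod μ) {q : ℝ × ℝ | q.2 = c} = 0 := by
  have h : {q : ℝ × ℝ | q.2 = c} = (Set.univ : Set ℝ) ×ˢ ({c} : Set ℝ) := by
    ext q
    simp only [Set.mem_setOf_eq, Set.mem_prod, Set.mem_univ, true_and, Set.mem_singleton_iff]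
  rw [h, Measure.prod_prod, hs c, mul_zero]

/-- Generic reduction: the expected utility of bidder `i` under a product strategy
whose rows are pushforwards of `μ` equals an explicit integral over `μ³`. -/
lemma expected_eq_integral
    (T : TieRule (Fin 3) (Fin 3)) (i : Fin 3)
    (κ : Fin 3 → Measure (Fin 3 → ℝ)) (hκp : ∀ k, IsProbabilityMeasure (κ k))
    (gg : Fin 3 → ℝ → (Fin 3 → ℝ)) (hggm : ∀ k, Measurable (gg k))
    (hκ : ∀ k, κ k = μ.map (gg k))
    (hauto : ∀ (x : ℝ) (k : Fin 3), gg k ((gg k x) k) = gg k x)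
    (hown : ∀ x : ℝ, (gg (i+1) x) (i+1) = x ∧ (gg (i+2) x) (i+2) = x)
    (Φ : ℝ × (ℝ × ℝ) → ℝ) (hΦ : Measurable Φ)
    (hΦR : ∀ x : Fin 3 → ℝ,
      Φ ((gg i (x i)) i, (x (i+2), x (i+1))) = Φ (x i, (x (i+2), x (i+1))))
    (S : Set (ℝ × (ℝ × ℝ))) (hSm : MeasurableSet S) (hS0 : (μ.prod (μ.prod μ)) S = 0)
    (hRinS : ∀ x : Fin 3 → ℝ, ((gg i (x i)) i, (x (i+2), x (i+1))) ∈ S →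
      (x i, (x (i+2), x (i+1))) ∈ S)
    (hpoint : ∀ b : Fin 3 → Fin 3 → ℝ, (∀ k, b k = gg k (b k k)) →
      (b i i, (b (i+2) (i+2), b (i+1) (i+1))) ∉ S →
      utility (fun k : Fin 3 => singleMinded ({k, k + 1} : Finset (Fin 3)) 1) T b i
        = Φ (b i i, (b (i+2) (i+2), b (i+1) (i+1)))) :
    expectedUtility (fun k : Fin 3 => singleMinded ({k, k + 1} : Finset (Fin 3)) 1) T κ i
      = ∫ p, Φ p ∂(μ.prod (μ.prod μ)) := by
  haveI : ∀ k, SigmaFinite (κ k) := fun k => by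
    haveI := hκp k
    infer_instance
  set v : Fin 3 → Finset (Fin 3) → ℝ :=
    fun k => singleMinded ({k, k + 1} : Finset (Fin 3)) 1 with hv
  set P : Measure (Fin 3 → ℝ) := Measure.pi (fun _ : Fin 3 => μ) with hPdef
  set B : (Fin 3 → ℝ) → Fin 3 → Fin 3 → ℝ := fun x k => gg k (x k) with hBdef
  have hBmeas : Measurable B :=
    measurable_pi_lambda _ fun k => (hggm k).comp (measurable_pi_apply k)
  have hBmp : MeasurePreserving B P (Measure.pi κ) :=
    measurePreserving_pi _ _ (fun k => ⟨hggm k, (hκ k).symm⟩)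
  -- the permutation
  set e : Fin 3 ≃ Fin 3 := (Equiv.swap (1 : Fin 3) 2).trans (Equiv.addLeft i) with he
  have he0 : e 0 = i := by
    show (Equiv.addLeft i) ((Equiv.swap (1 : Fin 3) 2) 0) = i
    rw [Equiv.swap_apply_of_ne_of_ne (by decide) (by decide)]
    show i + 0 = i
    exact add_zero i
  have he1 : e 1 = i + 2 := by
    show (Equiv.addLeft i) ((Equiv.swap (1 : Fin 3) 2) 1) = i + 2
    rw [Equiv.swap_apply_left]
    rfl
  have he2 : e 2 = i + 1 := by
    show (Equiv.addLeft i) ((Equiv.swap (1 : Fin 3) 2) 2) = i + 1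
    rw [Equiv.swap_apply_right]
    rfl
  have hQmp : MeasurePreserving (fun x : Fin 3 → ℝ => (x i, (x (i+2), x (i+1)))) P
      (μ.prod (μ.prod μ)) := by
    have h := mp_Q μ e
    rw [he0, he1, he2] at h
    exact h
  set R : (Fin 3 → Fin 3 → ℝ) → ℝ × (ℝ × ℝ) :=
    fun b => (b i i, (b (i+2) (i+2), b (i+1) (i+1))) with hRdef
  have hev : ∀ k j : Fin 3, Measurable (fun b : Fin 3 → Fin 3 → ℝ => b k j) :=
    fun k j => (measurable_pi_apply j).comp (measurable_pi_apply k)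
  have hRmeas : Measurable R :=
    (hev i i).prodMk ((hev (i+2) (i+2)).prodMk (hev (i+1) (i+1)))
  set W : Set (Fin 3 → Fin 3 → ℝ) :=
    (⋂ (k : Fin 3) (j : Fin 3), {b : Fin 3 → Fin 3 → ℝ | b k j = gg k (b k k) j})
      ∩ R ⁻¹' Sᶜ with hWdef
  have hWmeas : MeasurableSet W := by
    apply MeasurableSet.inter
    · refine MeasurableSet.iInter fun k => MeasurableSet.iInter fun j => ?_
      exact measurableSet_eq_fun (hev k j)
        ((measurable_pi_apply j).comp ((hggm k).comp (hev k k)))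
    · exact hRmeas hSm.compl
  have hWnull : (Measure.pi κ) Wᶜ = 0 := by
    rw [← hBmp.map_eq, Measure.map_apply hBmeas hWmeas.compl]
    have hsub : B ⁻¹' Wᶜ ⊆ (fun x : Fin 3 → ℝ => (x i, (x (i+2), x (i+1)))) ⁻¹' S := by
      intro x hx
      have hstr : ∀ k, B x k = gg k ((B x) k k) := by
        intro k
        show gg k (x k) = gg k ((gg k (x k)) k)
        exact (hauto (x k) k).symm
      have h1 : R (B x) ∈ S := by
        by_contra hc
        exact hx ⟨Set.mem_iInter.2 fun k => Set.mem_iInter.2 fun j => congrFun (hstr k) j, hc⟩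
      have hy : (B x) (i+2) (i+2) = x (i+2) := (hown (x (i+2))).2
      have hz : (B x) (i+1) (i+1) = x (i+1) := (hown (x (i+1))).1
      have hRB : R (B x) = ((gg i (x i)) i, (x (i+2), x (i+1))) := by
        show ((B x) i i, ((B x) (i+2) (i+2), (B x) (i+1) (i+1)))
            = ((gg i (x i)) i, (x (i+2), x (i+1)))
        rw [hy, hz]
      rw [hRB] at h1
      exact hRinS x h1
    refine measure_mono_null hsub ?_
    rw [hQmp.measure_preimage hSm.nullMeasurableSet]
    exact hS0
  have hae : ∀ᵐ b ∂(Measure.pi κ), utility v T b i = Φ (R b) := by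
    rw [ae_iff]
    refine measure_mono_null ?_ hWnull
    intro b hb
    simp only [Set.mem_setOf_eq] at hb
    simp only [Set.mem_compl_iff]
    intro hbW
    obtain ⟨hb1, hb2⟩ := hbW
    exact hb (hpoint b
      (fun k => funext fun j => Set.mem_iInter.1 (Set.mem_iInter.1 hb1 k) j) hb2)
  have hcalc : expectedUtility v T κ i = ∫ p, Φ p ∂(μ.prod (μ.prod μ)) := by
    show (∫ b, utility v T b i ∂(Measure.pi κ)) = _
    rw [integral_congr_ae hae, ← hBmp.map_eq]
    have hfm : AEStronglyMeasurable (fun b : Fin 3 → Fin 3 → ℝ => Φ (R b)) (P.map B) :=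
      (hΦ.comp hRmeas).aestronglyMeasurable
    rw [integral_map hBmeas.aemeasurable hfm]
    have hptw : ∀ x : Fin 3 → ℝ, Φ (R (B x)) = Φ (x i, (x (i+2), x (i+1))) := by
      intro x
      have hy : (B x) (i+2) (i+2) = x (i+2) := (hown (x (i+2))).2
      have hz : (B x) (i+1) (i+1) = x (i+1) := (hown (x (i+1))).1
      have hRB : R (B x) = ((gg i (x i)) i, (x (i+2), x (i+1))) := by
        show ((B x) i i, ((B x) (i+2) (i+2), (B x) (i+1) (i+1)))
            = ((gg i (x i)) i, (x (i+2), x (i+1)))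
        rw [hy, hz]
      rw [hRB, hΦR]
    rw [integral_congr_ae (Filter.Eventually.of_forall hptw), ← hQmp.map_eq]
    exact (integral_map hQmp.measurable.aemeasurable hΦ.aestronglyMeasurable).symm
  exact hcalc
end GEN

end Triangle

/-- The triangle game: three items and three single-minded bidders, bidder `i`
valuing the pair `{i, i+1}` (mod 3) at `1`. If every bidder draws `x` uniformly from
`[0,1/2]` (CDF `F(x) = 2x`) and bids `x` on both items of his pair and `0` on the third,
then this is a mixed Nash equilibrium under any tie-breaking rule and every bidder's
expected utility is `0`. -/
theorem triangle_mixed_nash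
    (μ : Measure ℝ) (hμ : IsProbabilityMeasure μ)
    (hcdf : ∀ x : ℝ, μ (Set.Iic x) =
      if x < 0 then 0 else if x ≤ 1 / 2 then ENNReal.ofReal (2 * x) else 1)
    (σ : Fin 3 → Measure (Fin 3 → ℝ))
    (hσ : ∀ i : Fin 3, σ i =
      μ.map (fun x => fun j : Fin 3 => if j ∈ ({i, i + 1} : Finset (Fin 3)) then x else 0))
    (T : TieRule (Fin 3) (Fin 3)) :
    MixedNash (fun i : Fin 3 => singleMinded ({i, i + 1} : Finset (Fin 3)) 1) T σ ∧
    ∀ i : Fin 3,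
      expectedUtility (fun i : Fin 3 => singleMinded ({i, i + 1} : Finset (Fin 3)) 1)
        T σ i = 0 := by
  classical
  haveI := hμ
  have d1 : ∀ k : Fin 3, k ∈ ({k, k + 1} : Finset (Fin 3)) := by decide
  have d2 : ∀ k : Fin 3, k + 1 ∈ ({k, k + 1} : Finset (Fin 3)) := by decide
  have d3 : ∀ k : Fin 3, k + 2 ∉ ({k, k + 1} : Finset (Fin 3)) := by decide
  have dq1 : ∀ k : Fin 3, ¬(k + 1 = k) := by decide
  have dq2 : ∀ k : Fin 3, ¬(k + 2 = k) := by decide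
  have hμν := Triangle.mu_eq hμ hcdf
  have hsing : ∀ a : ℝ, μ {a} = 0 := fun a => Triangle.mu_singleton hμν a
  have hcompl : μ (Set.Ioc (0:ℝ) (1/2))ᶜ = 0 := Triangle.mu_compl_Ioc hμν
  have hIic0 : μ (Set.Iic (0:ℝ)) = 0 := by
    rw [hcdf 0]
    norm_num
  have hFrIoc : ∀ t : ℝ, 0 < t → t ≤ 1/2 → Triangle.Fr μ t = 2*t := fun t h0 h1 => by
    rw [Triangle.Fr_eq hμν t (le_of_lt h0), if_pos h1]
  have hσg : ∀ k, σ k = μ.map (Triangle.gfun k) := fun k => hσ k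
  have hσp : ∀ k, IsProbabilityMeasure (σ k) := fun k => by
    rw [hσg k]
    exact Measure.isProbabilityMeasure_map (Triangle.gfun_meas k).aemeasurable
  have gown : ∀ (k : Fin 3) (x : ℝ), (Triangle.gfun k x) k = x := fun k x => if_pos (d1 k)
  have gnext : ∀ (k : Fin 3) (x : ℝ), (Triangle.gfun k x) (k+1) = x := fun k x => if_pos (d2 k)
  have gtwo : ∀ (k : Fin 3) (x : ℝ), (Triangle.gfun k x) (k+2) = 0 := fun k x => if_neg (d3 k)
  have gauto : ∀ (x : ℝ) (k : Fin 3),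
      Triangle.gfun k ((Triangle.gfun k x) k) = Triangle.gfun k x := by
    intro x k
    rw [gown k x]
  -- Part 1: equilibrium expected utility is zero
  have hEU : ∀ i : Fin 3,
      expectedUtility (fun k : Fin 3 => singleMinded ({k, k + 1} : Finset (Fin 3)) 1)
        T σ i = 0 := by
    intro i
    set S : Set (ℝ × (ℝ × ℝ)) :=
      {p : ℝ × (ℝ × ℝ) | p.1 ≤ 0} ∪ {p : ℝ × (ℝ × ℝ) | p.2.1 ≤ 0}
        ∪ {p : ℝ × (ℝ × ℝ) | p.2.2 ≤ 0} ∪ {p : ℝ × (ℝ × ℝ) | p.1 = p.2.1}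
        ∪ {p : ℝ × (ℝ × ℝ) | p.1 = p.2.2} with hSdef
    have m1 : Measurable fun p : ℝ × (ℝ × ℝ) => p.1 := measurable_fst
    have m21 : Measurable fun p : ℝ × (ℝ × ℝ) => p.2.1 := measurable_fst.comp measurable_snd
    have m22 : Measurable fun p : ℝ × (ℝ × ℝ) => p.2.2 := measurable_snd.comp measurable_snd
    have hSm : MeasurableSet S :=
      ((((measurableSet_le m1 measurable_const).union
        (measurableSet_le m21 measurable_const)).union
        (measurableSet_le m22 measurable_const)).union (measurableSet_eq_fun m1 m21)).union
        (measurableSet_eq_fun m1 m22)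
    have hS0 : (μ.prod (μ.prod μ)) S = 0 := by
      refine measure_union_null (measure_union_null (measure_union_null
        (measure_union_null ?_ ?_) ?_) ?_) ?_
      · exact Triangle.null_fst_le hIic0
      · exact Triangle.null_snd1_le hIic0
      · exact Triangle.null_snd2_le hIic0
      · exact Triangle.null_diag1 hsing
      · exact Triangle.null_diag2 hsing
    have hpoint : ∀ b : Fin 3 → Fin 3 → ℝ, (∀ k, b k = Triangle.gfun k (b k k)) →
        (b i i, (b (i+2) (i+2), b (i+1) (i+1))) ∉ S →
        utility (fun k : Fin 3 => singleMinded ({k, k + 1} : Finset (Fin 3)) 1) T b i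
          = (fun p : ℝ × (ℝ × ℝ) => Triangle.Hfun p.1 p.1 0 p.2)
            (b i i, (b (i+2) (i+2), b (i+1) (i+1))) := by
      intro b hbstr hbS
      simp only [hSdef, Set.mem_union, Set.mem_setOf_eq, not_or, not_le] at hbS
      obtain ⟨⟨⟨⟨hpos1, hpos2⟩, hpos3⟩, hne1⟩, hne2⟩ := hbS
      have key := Triangle.utility_formula T i b (Triangle.gfun i (b i i))
        (b (i+2) (i+2)) (b (i+1) (i+1)) (hbstr i) (hbstr (i+1)) (hbstr (i+2))
        hpos2 hpos3
        (by rw [gown i (b i i)]; exact hne1)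
        (by rw [gnext i (b i i)]; exact hne2)
        (by rw [gtwo i (b i i)]; exact ne_of_lt hpos2)
        (by rw [gtwo i (b i i)]; exact ne_of_lt hpos3)
      rw [key, gown i (b i i), gnext i (b i i), gtwo i (b i i)]
    have heq := Triangle.expected_eq_integral T i σ hσp Triangle.gfun Triangle.gfun_meas hσg
      gauto (fun x => ⟨gown (i+1) x, gown (i+2) x⟩)
      (fun p : ℝ × (ℝ × ℝ) => Triangle.Hfun p.1 p.1 0 p.2) Triangle.meas_G
      (fun x => by rw [gown i (x i)])
      S hSm hS0
      (fun x hx => by rwa [gown i (x i)] at hx)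
      hpoint
    have heq2 : expectedUtility (fun k : Fin 3 => singleMinded ({k, k + 1} : Finset (Fin 3)) 1)
        T σ i = ∫ x : ℝ × (ℝ × ℝ), Triangle.Hfun x.1 x.1 0 x.2 ∂(μ.prod (μ.prod μ)) := heq
    rw [heq2]
    exact Triangle.integral_G hcompl hFrIoc
  -- Part 2: deviations give at most zero
  have hDEV : ∀ (i : Fin 3) (b' : Fin 3 → ℝ), (∀ j, 0 ≤ b' j) →
      expectedUtility (fun k : Fin 3 => singleMinded ({k, k + 1} : Finset (Fin 3)) 1)
        T (Function.update σ i (Measure.dirac b')) i ≤ 0 := by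
    intro i b' hb'
    set gg : Fin 3 → ℝ → (Fin 3 → ℝ) :=
      Function.update Triangle.gfun i (fun _ : ℝ => b') with hggdef
    have hggi : gg i = fun _ => b' := Function.update_self i _ _
    have hggne : ∀ k, k ≠ i → gg k = Triangle.gfun k := fun k hk =>
      Function.update_of_ne hk _ _
    have hggm : ∀ k, Measurable (gg k) := by
      intro k
      by_cases hk : k = i
      · subst hk
        rw [hggi]
        exact measurable_const
      · rw [hggne k hk]
        exact Triangle.gfun_meas k
    have hκ : ∀ k, Function.update σ i (Measure.dirac b') k = μ.map (gg k) := by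
      intro k
      by_cases hk : k = i
      · subst hk
        rw [Function.update_self, hggi, Measure.map_const, measure_univ, one_smul]
      · rw [Function.update_of_ne hk, hggne k hk, hσg k]
    have hκp : ∀ k, IsProbabilityMeasure (Function.update σ i (Measure.dirac b') k) := by
      intro k
      by_cases hk : k = i
      · subst hk
        rw [Function.update_self]
        infer_instance
      · rw [Function.update_of_ne hk]
        exact hσp k
    have hauto : ∀ (x : ℝ) (k : Fin 3), gg k ((gg k x) k) = gg k x := by
      intro x k
      by_cases hk : k = i
      · subst hk
        rw [hggi]
      · rw [hggne k hk]
        exact gauto x k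
    have hown : ∀ x : ℝ, (gg (i+1) x) (i+1) = x ∧ (gg (i+2) x) (i+2) = x := by
      intro x
      constructor
      · rw [hggne (i+1) (dq1 i)]
        exact gown (i+1) x
      · rw [hggne (i+2) (dq2 i)]
        exact gown (i+2) x
    set S2 : Set (ℝ × ℝ) :=
      {q : ℝ × ℝ | q.1 ≤ 0} ∪ {q : ℝ × ℝ | q.2 ≤ 0} ∪ {q : ℝ × ℝ | q.1 = b' i}
        ∪ {q : ℝ × ℝ | q.2 = b' (i+1)} ∪ {q : ℝ × ℝ | q.1 = b' (i+2)}
        ∪ {q : ℝ × ℝ | q.2 = b' (i+2)} with hS2def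
    have hS2m : MeasurableSet S2 :=
      (((((measurableSet_le measurable_fst measurable_const).union
        (measurableSet_le measurable_snd measurable_const)).union
        (measurableSet_eq_fun measurable_fst measurable_const)).union
        (measurableSet_eq_fun measurable_snd measurable_const)).union
        (measurableSet_eq_fun measurable_fst measurable_const)).union
        (measurableSet_eq_fun measurable_snd measurable_const)
    have hS20 : (μ.prod μ) S2 = 0 := by
      refine measure_union_null (measure_union_null (measure_union_null (measure_union_null
        (measure_union_null ?_ ?_) ?_) ?_) ?_) ?_
      · exact Triangle.null2_fst_le hIic0
      · exact Triangle.null2_snd_le hIic0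
      · exact Triangle.null2_fst_eq hsing _
      · exact Triangle.null2_snd_eq hsing _
      · exact Triangle.null2_fst_eq hsing _
      · exact Triangle.null2_snd_eq hsing _
    have hSm : MeasurableSet ((Set.univ : Set ℝ) ×ˢ S2) := MeasurableSet.univ.prod hS2m
    have hS0 : (μ.prod (μ.prod μ)) ((Set.univ : Set ℝ) ×ˢ S2) = 0 := by
      rw [Measure.prod_prod, hS20, mul_zero]
    have hpoint : ∀ b : Fin 3 → Fin 3 → ℝ, (∀ k, b k = gg k (b k k)) →
        (b i i, (b (i+2) (i+2), b (i+1) (i+1))) ∉ (Set.univ : Set ℝ) ×ˢ S2 →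
        utility (fun k : Fin 3 => singleMinded ({k, k + 1} : Finset (Fin 3)) 1) T b i
          = (fun p : ℝ × (ℝ × ℝ) => Triangle.Hfun (b' i) (b' (i+1)) (b' (i+2)) p.2)
            (b i i, (b (i+2) (i+2), b (i+1) (i+1))) := by
      intro b hbstr hbS
      have hbS2 : (b (i+2) (i+2), b (i+1) (i+1)) ∉ S2 := fun hc => hbS ⟨trivial, hc⟩
      simp only [hS2def, Set.mem_union, Set.mem_setOf_eq, not_or, not_le] at hbS2
      obtain ⟨⟨⟨⟨⟨hpos2, hpos3⟩, hne1⟩, hne2⟩, hne3⟩, hne4⟩ := hbS2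
      have hbi : b i = b' := by
        have h := hbstr i
        rwa [hggi] at h
      have hb1 : b (i+1) = Triangle.gfun (i+1) (b (i+1) (i+1)) := by
        have h := hbstr (i+1)
        rwa [hggne (i+1) (dq1 i)] at h
      have hb2 : b (i+2) = Triangle.gfun (i+2) (b (i+2) (i+2)) := by
        have h := hbstr (i+2)
        rwa [hggne (i+2) (dq2 i)] at h
      exact Triangle.utility_formula T i b b' (b (i+2) (i+2)) (b (i+1) (i+1)) hbi hb1 hb2
        hpos2 hpos3 (fun h => hne1 h.symm) (fun h => hne2 h.symm) (fun h => hne3 h.symm)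
        (fun h => hne4 h.symm)
    have heq := Triangle.expected_eq_integral T i (Function.update σ i (Measure.dirac b')) hκp
      gg hggm hκ hauto hown
      (fun p : ℝ × (ℝ × ℝ) => Triangle.Hfun (b' i) (b' (i+1)) (b' (i+2)) p.2)
      ((Triangle.Hfun_meas _ _ _).comp measurable_snd)
      (fun x => rfl)
      ((Set.univ : Set ℝ) ×ˢ S2) hSm hS0
      (fun x hx => ⟨trivial, hx.2⟩)
      hpoint
    have heq2 : expectedUtility (fun k : Fin 3 => singleMinded ({k, k + 1} : Finset (Fin 3)) 1)
        T (Function.update σ i (Measure.dirac b')) i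
        = ∫ x : ℝ × (ℝ × ℝ), Triangle.Hfun (b' i) (b' (i+1)) (b' (i+2)) x.2
            ∂(μ.prod (μ.prod μ)) := heq
    rw [heq2, Triangle.integral_Hfun_snd]
    exact Triangle.final_ineq (b' i) (b' (i+1)) (b' (i+2)) _ _ _ (hb' i) (hb' (i+1))
      (hb' (i+2)) (Triangle.Fr_eq hμν _ (hb' i)) (Triangle.Fr_eq hμν _ (hb' (i+1)))
      (Triangle.Fr_nonneg _)
  refine ⟨?_, hEU⟩
  intro i b' hb'
  rw [hEU i]
  exact hDEV i b' hb'
end
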